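/- arXiv:1912.11577 — 6 statements merged into one kernel-verified Lean document; each statement's English description precedes it below -/
import Mathlib

section
/- Let (H,R) be a quasitriangular Hopf algebra with R=R¹⊗R². For any H-bimodule M, define coactions ρˡ(m)=R²⊗R¹▷m and ρʳ(m)=m◁R¹⊗R². Then M with these coactions is a Yetter-Drinfel'd-Long bimodule over H; in particular (m◁h₂)₍₀₎⊗h₁(m◁h₂)₍₁₎=m₍₀₎◁h₁⊗m₍₁₎h₂ and (h₁▷m)₍₋₁₎h₂⊗(h₁▷m)₍₀₎=h₁m₍₋₁₎⊗h₂▷m₍₀₎ hold. -/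
noncomputable section
open TensorProduct

namespace YDL

variable (K : Type) [Field K] (H : Type) [Ring H] [HopfAlgebra K H]

abbrev mu : H ⊗[K] H →ₗ[K] H := LinearMap.mul' K H
abbrev cm : H →ₗ[K] H ⊗[K] H := Coalgebra.comul
abbrev cu : H →ₗ[K] K := Coalgebra.counit
abbrev sa : H →ₗ[K] H := HopfAlgebra.antipode (R := K)
abbrev eta : K →ₗ[K] H := Algebra.linearMap K H

/-- Yetter–Drinfel'd–Long bimodule over `H` (Definition 2.1). -/
structure IsYDLong (M : Type) [AddCommGroup M] [Module K M]
    (lact : H ⊗[K] M →ₗ[K] M) (ract : M ⊗[K] H →ₗ[K] M)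
    (lcoact : M →ₗ[K] H ⊗[K] M) (rcoact : M →ₗ[K] M ⊗[K] H) : Prop where
  lact_one : ∀ m : M, lact (1 ⊗ₜ m) = m
  lact_mul : ∀ (g h : H) (m : M), lact ((g * h) ⊗ₜ m) = lact (g ⊗ₜ lact (h ⊗ₜ m))
  ract_one : ∀ m : M, ract (m ⊗ₜ 1) = m
  ract_mul : ∀ (m : M) (g h : H), ract (m ⊗ₜ (g * h)) = ract (ract (m ⊗ₜ g) ⊗ₜ h)
  bimod : ∀ (h : H) (m : M) (g : H),
    ract (lact (h ⊗ₜ m) ⊗ₜ g) = lact (h ⊗ₜ ract (m ⊗ₜ g))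
  lcoassoc : (TensorProduct.assoc K H H M).toLinearMap ∘ₗ (cm K H).rTensor M ∘ₗ lcoact
      = lcoact.lTensor H ∘ₗ lcoact
  lcounit : (TensorProduct.lid K M).toLinearMap ∘ₗ (cu K H).rTensor M ∘ₗ lcoact
      = LinearMap.id
  rcoassoc : (TensorProduct.assoc K M H H).toLinearMap ∘ₗ rcoact.rTensor H ∘ₗ rcoact
      = (cm K H).lTensor M ∘ₗ rcoact
  rcounit : (TensorProduct.rid K M).toLinearMap ∘ₗ (cu K H).lTensor M ∘ₗ rcoact
      = LinearMap.id
  bicomod : rcoact.lTensor H ∘ₗ lcoact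
      = (TensorProduct.assoc K H M H).toLinearMap ∘ₗ lcoact.rTensor H ∘ₗ rcoact
  yd23 : (mu K H).rTensor M ∘ₗ (TensorProduct.comm K H H).toLinearMap.rTensor M
        ∘ₗ (TensorProduct.assoc K H H M).symm.toLinearMap ∘ₗ lcoact.lTensor H ∘ₗ lact.lTensor H
        ∘ₗ (TensorProduct.assoc K H H M).toLinearMap
        ∘ₗ (TensorProduct.comm K H H).toLinearMap.rTensor M ∘ₗ (cm K H).rTensor M
      = TensorProduct.map (mu K H) lact
        ∘ₗ (tensorTensorTensorComm K H H H M).toLinearMap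
        ∘ₗ TensorProduct.map (cm K H) lcoact
  long24 : rcoact ∘ₗ lact
      = lact.rTensor H ∘ₗ (TensorProduct.assoc K H M H).symm.toLinearMap ∘ₗ rcoact.lTensor H
  yd25 : (mu K H).lTensor M ∘ₗ (TensorProduct.comm K H H).toLinearMap.lTensor M
        ∘ₗ (TensorProduct.assoc K M H H).toLinearMap ∘ₗ rcoact.rTensor H ∘ₗ ract.rTensor H
        ∘ₗ (TensorProduct.assoc K M H H).symm.toLinearMap
        ∘ₗ (TensorProduct.comm K H H).toLinearMap.lTensor M ∘ₗ (cm K H).lTensor M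
      = TensorProduct.map ract (mu K H)
        ∘ₗ (tensorTensorTensorComm K M H H H).toLinearMap
        ∘ₗ TensorProduct.map rcoact (cm K H)
  long26 : lcoact ∘ₗ ract
      = ract.lTensor H ∘ₗ (TensorProduct.assoc K H M H).toLinearMap ∘ₗ lcoact.rTensor H

/-- The braiding `ψ_{M,N}(m ⊗ n) = m₍₋₁₎ ▷ n₍₀₎ ⊗ m₍₀₎ ◁ n₍₁₎`. -/
def braid {M N : Type} [AddCommGroup M] [Module K M] [AddCommGroup N] [Module K N]
    (lcoactM : M →ₗ[K] H ⊗[K] M) (ractM : M ⊗[K] H →ₗ[K] M)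
    (lactN : H ⊗[K] N →ₗ[K] N) (rcoactN : N →ₗ[K] N ⊗[K] H) :
    M ⊗[K] N →ₗ[K] N ⊗[K] M :=
  TensorProduct.map lactN ractM ∘ₗ (tensorTensorTensorComm K H M N H).toLinearMap
    ∘ₗ TensorProduct.map lcoactM rcoactN

/-- The inverse braiding `ψ⁻¹_{N,M}(n ⊗ m) = m₍₀₎ ◁ S⁻¹(n₍₁₎) ⊗ S⁻¹(m₍₋₁₎) ▷ n₍₀₎`,
where `Si` is the (given) inverse of the antipode. -/
def braidInv (Si : H →ₗ[K] H) {M N : Type}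
    [AddCommGroup M] [Module K M] [AddCommGroup N] [Module K N]
    (lcoactM : M →ₗ[K] H ⊗[K] M) (ractM : M ⊗[K] H →ₗ[K] M)
    (lactN : H ⊗[K] N →ₗ[K] N) (rcoactN : N →ₗ[K] N ⊗[K] H) :
    N ⊗[K] M →ₗ[K] M ⊗[K] N :=
  TensorProduct.map ractM lactN
    ∘ₗ (TensorProduct.comm K (H ⊗[K] N) (M ⊗[K] H)).toLinearMap
    ∘ₗ (tensorTensorTensorComm K H M N H).toLinearMap
    ∘ₗ (TensorProduct.comm K (N ⊗[K] H) (H ⊗[K] M)).toLinearMap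
    ∘ₗ TensorProduct.map (Si.lTensor N ∘ₗ rcoactN) (Si.rTensor M ∘ₗ lcoactM)

/-! Structure maps of `H₁, H₂, H₃, H₄` from Example 2.4. -/

/-- `h ▷ (k ⊗ l) = hk ⊗ l`. -/
def lactA : H ⊗[K] (H ⊗[K] H) →ₗ[K] H ⊗[K] H :=
  (mu K H).rTensor H ∘ₗ (TensorProduct.assoc K H H H).symm.toLinearMap

/-- `l ⊗ h ↦ S(h₁) l h₂`. -/
def adR : H ⊗[K] H →ₗ[K] H :=
  mu K H ∘ₗ (mu K H ∘ₗ (sa K H).rTensor H ∘ₗ (TensorProduct.comm K H H).toLinearMap).rTensor H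
    ∘ₗ (TensorProduct.assoc K H H H).symm.toLinearMap ∘ₗ (cm K H).lTensor H

/-- `(k ⊗ l) ◁ h = k ⊗ S(h₁) l h₂`. -/
def ractA : (H ⊗[K] H) ⊗[K] H →ₗ[K] H ⊗[K] H :=
  (adR K H).lTensor H ∘ₗ (TensorProduct.assoc K H H H).toLinearMap

/-- `k ↦ k₁ S(k₃) ⊗ k₂`. -/
def c1 : H →ₗ[K] H ⊗[K] H :=
  (mu K H).rTensor H ∘ₗ (TensorProduct.assoc K H H H).symm.toLinearMap
    ∘ₗ ((sa K H).rTensor H ∘ₗ (TensorProduct.comm K H H).toLinearMap).lTensor H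
    ∘ₗ (cm K H).lTensor H ∘ₗ cm K H

/-- `ρˡ(k ⊗ l) = k₁ S(k₃) ⊗ (k₂ ⊗ l)`. -/
def lcoactA : H ⊗[K] H →ₗ[K] H ⊗[K] (H ⊗[K] H) :=
  (TensorProduct.assoc K H H H).toLinearMap ∘ₗ (c1 K H).rTensor H

/-- `ρʳ(k ⊗ l) = (k ⊗ l₁) ⊗ l₂`. -/
def rcoactA : H ⊗[K] H →ₗ[K] (H ⊗[K] H) ⊗[K] H :=
  (TensorProduct.assoc K H H H).symm.toLinearMap ∘ₗ (cm K H).lTensor H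

/-- `h ⊗ x ↦ h₁ x S(h₂)`. -/
def ad : H ⊗[K] H →ₗ[K] H :=
  mu K H ∘ₗ (mu K H ∘ₗ (sa K H).lTensor H ∘ₗ (TensorProduct.comm K H H).toLinearMap).lTensor H
    ∘ₗ (TensorProduct.assoc K H H H).toLinearMap ∘ₗ (cm K H).rTensor H

/-- `h ▷ (k ⊗ l) = h₁ k S(h₂) ⊗ l`. -/
def lactB : H ⊗[K] (H ⊗[K] H) →ₗ[K] H ⊗[K] H :=
  (ad K H).rTensor H ∘ₗ (TensorProduct.assoc K H H H).symm.toLinearMap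

/-- `(k ⊗ l) ◁ h = k ⊗ l h`. -/
def ractB : (H ⊗[K] H) ⊗[K] H →ₗ[K] H ⊗[K] H :=
  (mu K H).lTensor H ∘ₗ (TensorProduct.assoc K H H H).toLinearMap

/-- `ρˡ(k ⊗ l) = k₁ ⊗ (k₂ ⊗ l)`. -/
def lcoactB : H ⊗[K] H →ₗ[K] H ⊗[K] (H ⊗[K] H) :=
  (TensorProduct.assoc K H H H).toLinearMap ∘ₗ (cm K H).rTensor H

/-- `l ↦ l₂ ⊗ S(l₁) l₃`. -/
def c2 : H →ₗ[K] H ⊗[K] H :=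
  (mu K H).lTensor H ∘ₗ ((sa K H).rTensor H).lTensor H ∘ₗ (TensorProduct.assoc K H H H).toLinearMap
    ∘ₗ (TensorProduct.comm K H H).toLinearMap.rTensor H ∘ₗ (cm K H).rTensor H ∘ₗ cm K H

/-- `ρʳ(k ⊗ l) = (k ⊗ l₂) ⊗ S(l₁) l₃`. -/
def rcoactB : H ⊗[K] H →ₗ[K] (H ⊗[K] H) ⊗[K] H :=
  (TensorProduct.assoc K H H H).symm.toLinearMap ∘ₗ (c2 K H).lTensor H

/-- The `u`-map `m ↦ m₍₋₁₎ ▷ (m₍₀₎₍₀₎ ◁ m₍₀₎₍₁₎)`; the `u`-condition says it is the identity. -/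
def uMap {M : Type} [AddCommGroup M] [Module K M]
    (lact : H ⊗[K] M →ₗ[K] M) (ract : M ⊗[K] H →ₗ[K] M)
    (lcoact : M →ₗ[K] H ⊗[K] M) (rcoact : M →ₗ[K] M ⊗[K] H) : M →ₗ[K] M :=
  lact ∘ₗ ract.lTensor H ∘ₗ rcoact.lTensor H ∘ₗ lcoact

/-! Quasitriangular structures. -/

/-- `a ⊗ b ↦ (a ⊗ 1) ⊗ b`. -/
def i13 : H ⊗[K] H →ₗ[K] (H ⊗[K] H) ⊗[K] H :=
  (Algebra.TensorProduct.includeLeft (R := K) (A := H) (B := H) (S := K)).toLinearMap.rTensor H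

/-- `a ⊗ b ↦ (1 ⊗ a) ⊗ b`. -/
def i23 : H ⊗[K] H →ₗ[K] (H ⊗[K] H) ⊗[K] H :=
  (Algebra.TensorProduct.includeRight (R := K) (A := H) (B := H)).toLinearMap.rTensor H

/-- `a ⊗ b ↦ a ⊗ (1 ⊗ b)`. -/
def j13 : H ⊗[K] H →ₗ[K] H ⊗[K] (H ⊗[K] H) :=
  (Algebra.TensorProduct.includeRight (R := K) (A := H) (B := H)).toLinearMap.lTensor H

/-- `a ⊗ b ↦ a ⊗ (b ⊗ 1)`. -/
def j12 : H ⊗[K] H →ₗ[K] H ⊗[K] (H ⊗[K] H) :=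
  (Algebra.TensorProduct.includeLeft (R := K) (A := H) (B := H) (S := K)).toLinearMap.lTensor H

/-- Quasitriangular Hopf algebra (Definition 2.2, (QT1)–(QT4)). -/
structure IsQT (R : H ⊗[K] H) : Prop where
  unit : IsUnit R
  qt1 : (cm K H).rTensor H R = i13 K H R * i23 K H R
  qt2 : (cm K H).lTensor H R = j13 K H R * j12 K H R
  qt3 : ∀ h : H, (TensorProduct.comm K H H) (cm K H h) * R = R * cm K H h
  qt4l : (TensorProduct.lid K H) ((cu K H).rTensor H R) = 1
  qt4r : (TensorProduct.rid K H) ((cu K H).lTensor H R) = 1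

/-- Triangular Hopf algebra: quasitriangular with `R⁻¹ = τ(R)`. -/
structure IsTriangular (R : H ⊗[K] H) extends IsQT K H R : Prop where
  tri : R * (TensorProduct.comm K H H) R = 1 ∧ (TensorProduct.comm K H H) R * R = 1

/-- `ρˡ(m) = R² ⊗ R¹ ▷ m`. -/
def lcoactR {M : Type} [AddCommGroup M] [Module K M]
    (lact : H ⊗[K] M →ₗ[K] M) (R : H ⊗[K] H) : M →ₗ[K] H ⊗[K] M :=
  lact.lTensor H ∘ₗ (TensorProduct.assoc K H H M).toLinearMap
    ∘ₗ TensorProduct.mk K (H ⊗[K] H) M ((TensorProduct.comm K H H) R)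

/-- `ρʳ(m) = m ◁ R¹ ⊗ R²`. -/
def rcoactR {M : Type} [AddCommGroup M] [Module K M]
    (ract : M ⊗[K] H →ₗ[K] M) (R : H ⊗[K] H) : M →ₗ[K] M ⊗[K] H :=
  ract.rTensor H ∘ₗ (TensorProduct.assoc K M H H).symm.toLinearMap
    ∘ₗ (TensorProduct.mk K M (H ⊗[K] H)).flip R

/-! Coquasitriangular structures. -/

/-- The comultiplication of the tensor-product coalgebra `H ⊗ H`. -/
def cm2 : H ⊗[K] H →ₗ[K] (H ⊗[K] H) ⊗[K] (H ⊗[K] H) :=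
  (tensorTensorTensorComm K H H H H).toLinearMap ∘ₗ TensorProduct.map (cm K H) (cm K H)

/-- Convolution product on linear forms on `H ⊗ H`. -/
def conv (f g : H ⊗[K] H →ₗ[K] K) : H ⊗[K] H →ₗ[K] K :=
  LinearMap.mul' K K ∘ₗ TensorProduct.map f g ∘ₗ cm2 K H

/-- `g ⊗ h ↦ ε(g) ε(h)`, the convolution unit. -/
def epsBoth : H ⊗[K] H →ₗ[K] K :=
  LinearMap.mul' K K ∘ₗ TensorProduct.map (cu K H) (cu K H)

/-- Coquasitriangular Hopf algebra (Definition 2.3, (CQT1)–(CQT4)). -/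
structure IsCQT (z : H ⊗[K] H →ₗ[K] K) : Prop where
  inv : ∃ z' : H ⊗[K] H →ₗ[K] K, conv K H z z' = epsBoth K H ∧ conv K H z' z = epsBoth K H
  cqt1 : z ∘ₗ (mu K H).lTensor H
      = LinearMap.mul' K K ∘ₗ TensorProduct.map z z
        ∘ₗ (tensorTensorTensorComm K H H H H).toLinearMap ∘ₗ (cm K H).rTensor (H ⊗[K] H)
  cqt2 : z ∘ₗ (mu K H).rTensor H
      = LinearMap.mul' K K ∘ₗ TensorProduct.map z z
        ∘ₗ (tensorTensorTensorComm K H H H H).toLinearMap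
        ∘ₗ (TensorProduct.comm K H H).toLinearMap.lTensor (H ⊗[K] H)
        ∘ₗ (cm K H).lTensor (H ⊗[K] H)
  cqt3 : (TensorProduct.lid K H).toLinearMap
        ∘ₗ TensorProduct.map z (mu K H ∘ₗ (TensorProduct.comm K H H).toLinearMap) ∘ₗ cm2 K H
      = (TensorProduct.rid K H).toLinearMap ∘ₗ TensorProduct.map (mu K H) z ∘ₗ cm2 K H
  cqt4 : ∀ h : H, z (h ⊗ₜ 1) = cu K H h ∧ z ((1 : H) ⊗ₜ h) = cu K H h

/-- Cotriangular Hopf algebra: coquasitriangular with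
`ζ(h₁,g₁) ζ(g₂,h₂) = ε(h) ε(g)`. -/
structure IsCotriangular (z : H ⊗[K] H →ₗ[K] K) extends IsCQT K H z : Prop where
  cot : conv K H z (z ∘ₗ (TensorProduct.comm K H H).toLinearMap) = epsBoth K H

/-- `h ▷ m = ζ(h, m₍₋₁₎) m₍₀₎`. -/
def lactZ {M : Type} [AddCommGroup M] [Module K M]
    (lcoact : M →ₗ[K] H ⊗[K] M) (z : H ⊗[K] H →ₗ[K] K) : H ⊗[K] M →ₗ[K] M :=
  (TensorProduct.lid K M).toLinearMap ∘ₗ z.rTensor M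
    ∘ₗ (TensorProduct.assoc K H H M).symm.toLinearMap ∘ₗ lcoact.lTensor H

/-- `m ◁ h = m₍₀₎ ζ(h, m₍₁₎)`. -/
def ractZ {M : Type} [AddCommGroup M] [Module K M]
    (rcoact : M →ₗ[K] M ⊗[K] H) (z : H ⊗[K] H →ₗ[K] K) : M ⊗[K] H →ₗ[K] M :=
  (TensorProduct.rid K M).toLinearMap ∘ₗ z.lTensor M
    ∘ₗ (TensorProduct.comm K H H).toLinearMap.lTensor M
    ∘ₗ (TensorProduct.assoc K M H H).toLinearMap ∘ₗ rcoact.rTensor H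

end YDL
set_option maxHeartbeats 1600000 in
/-- over a quasitriangular Hopf algebra `(H, R)`, any
`H`-bimodule becomes a Yetter–Drinfel'd–Long bimodule via the coactions
`ρˡ(m) = R² ⊗ R¹ ▷ m` and `ρʳ(m) = m ◁ R¹ ⊗ R²`. -/
theorem statement10 (K : Type) [Field K] (H : Type) [Ring H] [HopfAlgebra K H]
    (R : H ⊗[K] H) (hR : YDL.IsQT K H R)
    (M : Type) [AddCommGroup M] [Module K M]
    (lact : H ⊗[K] M →ₗ[K] M) (ract : M ⊗[K] H →ₗ[K] M)
    (lact_one : ∀ m : M, lact (1 ⊗ₜ m) = m)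
    (lact_mul : ∀ (g h : H) (m : M), lact ((g * h) ⊗ₜ m) = lact (g ⊗ₜ lact (h ⊗ₜ m)))
    (ract_one : ∀ m : M, ract (m ⊗ₜ 1) = m)
    (ract_mul : ∀ (m : M) (g h : H), ract (m ⊗ₜ (g * h)) = ract (ract (m ⊗ₜ g) ⊗ₜ h))
    (bimod : ∀ (h : H) (m : M) (g : H),
      ract (lact (h ⊗ₜ m) ⊗ₜ g) = lact (h ⊗ₜ ract (m ⊗ₜ g))) :
    YDL.IsYDLong K H M lact ract (YDL.lcoactR K H lact R) (YDL.rcoactR K H ract R) := by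
  have lco_tmul : ∀ (a b : H) (m : M),
      YDL.lcoactR K H lact (a ⊗ₜ b) m = b ⊗ₜ lact (a ⊗ₜ m) := by
    intro a b m; simp [YDL.lcoactR]
  have lco_zero : ∀ m : M, YDL.lcoactR K H lact 0 m = 0 := by
    intro m; simp [YDL.lcoactR]
  have lco_add : ∀ (X Y : H ⊗[K] H) (m : M),
      YDL.lcoactR K H lact (X + Y) m
        = YDL.lcoactR K H lact X m + YDL.lcoactR K H lact Y m := by
    intro X Y m; simp [YDL.lcoactR, TensorProduct.add_tmul]
  have rco_tmul : ∀ (a b : H) (m : M),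
      YDL.rcoactR K H ract (a ⊗ₜ b) m = ract (m ⊗ₜ a) ⊗ₜ b := by
    intro a b m; simp [YDL.rcoactR]
  have rco_zero : ∀ m : M, YDL.rcoactR K H ract 0 m = 0 := by
    intro m; simp [YDL.rcoactR]
  have rco_add : ∀ (X Y : H ⊗[K] H) (m : M),
      YDL.rcoactR K H ract (X + Y) m
        = YDL.rcoactR K H ract X m + YDL.rcoactR K H ract Y m := by
    intro X Y m; simp [YDL.rcoactR, TensorProduct.tmul_add]
  have lcoR_zero : YDL.lcoactR K H lact (0 : H ⊗[K] H) = 0 :=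
    LinearMap.ext lco_zero
  have lcoR_add : ∀ X Y : H ⊗[K] H, YDL.lcoactR K H lact (X + Y)
      = YDL.lcoactR K H lact X + YDL.lcoactR K H lact Y :=
    fun X Y => LinearMap.ext (lco_add X Y)
  have rcoR_zero : YDL.rcoactR K H ract (0 : H ⊗[K] H) = 0 :=
    LinearMap.ext rco_zero
  have rcoR_add : ∀ X Y : H ⊗[K] H, YDL.rcoactR K H ract (X + Y)
      = YDL.rcoactR K H ract X + YDL.rcoactR K H ract Y :=
    fun X Y => LinearMap.ext (rco_add X Y)
  refine { lact_one := lact_one, lact_mul := lact_mul, ract_one := ract_one,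
           ract_mul := ract_mul, bimod := bimod,
           lcoassoc := ?_, lcounit := ?_, rcoassoc := ?_, rcounit := ?_,
           bicomod := ?_, yd23 := ?_, long24 := ?_, yd25 := ?_, long26 := ?_ }
  · -- lcoassoc
    apply LinearMap.ext; intro m
    set F : H ⊗[K] (H ⊗[K] H) →ₗ[K] H ⊗[K] (H ⊗[K] M) :=
      (TensorProduct.map LinearMap.id
          (TensorProduct.map LinearMap.id (lact ∘ₗ (TensorProduct.mk K H M).flip m)))
        ∘ₗ (TensorProduct.assoc K H H H).toLinearMap
        ∘ₗ (TensorProduct.comm K H (H ⊗[K] H)).toLinearMap with hF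
    have hFt : ∀ x y z : H, F (x ⊗ₜ (y ⊗ₜ z)) = y ⊗ₜ (z ⊗ₜ lact (x ⊗ₜ m)) := by
      intro x y z; simp [hF]
    have key1 : ∀ X : H ⊗[K] H,
        (TensorProduct.assoc K H H M)
            ((YDL.cm K H).rTensor M (YDL.lcoactR K H lact X m))
          = F ((YDL.cm K H).lTensor H X) := by
      intro X
      induction X using TensorProduct.induction_on with
      | zero => simp [lco_zero]
      | tmul a b =>
          rw [lco_tmul, LinearMap.lTensor_tmul, LinearMap.rTensor_tmul]
          generalize YDL.cm K H b = Y
          induction Y using TensorProduct.induction_on with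
          | zero => simp
          | tmul c d => rw [hFt]; simp
          | add x y hx hy =>
              simp only [TensorProduct.add_tmul, TensorProduct.tmul_add, map_add, hx, hy]
      | add x y hx hy => simp only [lco_add, map_add, hx, hy]
    have key2 : ∀ A B : H ⊗[K] H,
        (YDL.lcoactR K H lact B).lTensor H (YDL.lcoactR K H lact A m)
          = F (YDL.j13 K H B * YDL.j12 K H A) := by
      intro A B
      induction A using TensorProduct.induction_on with
      | zero => simp [lco_zero]
      | tmul a b =>
          rw [lco_tmul, LinearMap.lTensor_tmul]
          induction B using TensorProduct.induction_on with
          | zero => simp [lco_zero, lcoR_zero]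
          | tmul c d =>
              rw [lco_tmul]
              simp [YDL.j13, YDL.j12, Algebra.TensorProduct.tmul_mul_tmul, hFt, ← lact_mul]
          | add x y hx hy =>
              simp only [lcoR_add, LinearMap.lTensor_add, LinearMap.add_apply, map_add,
                TensorProduct.tmul_add, add_mul, hx, hy]
      | add x y hx hy => simp only [lco_add, map_add, mul_add, hx, hy]
    simp only [LinearMap.coe_comp, Function.comp_apply, LinearEquiv.coe_coe]
    rw [key1 R, key2 R R, hR.qt2]
  · -- lcounit
    apply LinearMap.ext; intro m
    have key : ∀ X : H ⊗[K] H,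
        (TensorProduct.lid K M) ((YDL.cu K H).rTensor M (YDL.lcoactR K H lact X m))
          = lact ((TensorProduct.rid K H) ((YDL.cu K H).lTensor H X) ⊗ₜ m) := by
      intro X
      induction X using TensorProduct.induction_on with
      | zero => simp [lco_zero]
      | tmul a b =>
          rw [lco_tmul]
          simp [← TensorProduct.smul_tmul']
      | add x y hx hy =>
          simp only [lco_add, map_add, TensorProduct.add_tmul, hx, hy]
    simp only [LinearMap.coe_comp, Function.comp_apply, LinearEquiv.coe_coe,
      LinearMap.id_apply]
    rw [key R, hR.qt4r, lact_one]
  · -- rcoassoc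
    apply LinearMap.ext; intro m
    set F : H ⊗[K] (H ⊗[K] H) →ₗ[K] M ⊗[K] (H ⊗[K] H) :=
      TensorProduct.map (ract ∘ₗ TensorProduct.mk K M H m) LinearMap.id with hF
    have hFt : ∀ (x : H) (Y : H ⊗[K] H), F (x ⊗ₜ Y) = ract (m ⊗ₜ x) ⊗ₜ Y := by
      intro x Y; simp [hF]
    have key1 : ∀ X : H ⊗[K] H,
        (YDL.cm K H).lTensor M (YDL.rcoactR K H ract X m)
          = F ((YDL.cm K H).lTensor H X) := by
      intro X
      induction X using TensorProduct.induction_on with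
      | zero => simp [rco_zero]
      | tmul a b => rw [rco_tmul, LinearMap.lTensor_tmul, LinearMap.lTensor_tmul, hFt]
      | add x y hx hy => simp only [rco_add, map_add, hx, hy]
    have key2 : ∀ A B : H ⊗[K] H,
        (TensorProduct.assoc K M H H)
            ((YDL.rcoactR K H ract B).rTensor H (YDL.rcoactR K H ract A m))
          = F (YDL.j13 K H A * YDL.j12 K H B) := by
      intro A B
      induction A using TensorProduct.induction_on with
      | zero => simp [rco_zero]
      | tmul a b =>
          rw [rco_tmul, LinearMap.rTensor_tmul]
          induction B using TensorProduct.induction_on with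
          | zero => simp [rco_zero, rcoR_zero]
          | tmul c d =>
              rw [rco_tmul]
              simp [YDL.j13, YDL.j12, Algebra.TensorProduct.tmul_mul_tmul, hFt, ract_mul]
          | add x y hx hy =>
              simp only [rcoR_add, LinearMap.rTensor_add, LinearMap.add_apply, map_add,
                TensorProduct.add_tmul, mul_add, hx, hy]
      | add x y hx hy => simp only [rco_add, map_add, add_mul, hx, hy]
    simp only [LinearMap.coe_comp, Function.comp_apply, LinearEquiv.coe_coe]
    rw [key1 R, key2 R R, hR.qt2]
  · -- rcounit
    apply LinearMap.ext; intro m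
    have key : ∀ X : H ⊗[K] H,
        (TensorProduct.rid K M) ((YDL.cu K H).lTensor M (YDL.rcoactR K H ract X m))
          = ract (m ⊗ₜ (TensorProduct.rid K H) ((YDL.cu K H).lTensor H X)) := by
      intro X
      induction X using TensorProduct.induction_on with
      | zero => simp [rco_zero]
      | tmul a b =>
          rw [rco_tmul]
          simp [TensorProduct.tmul_smul]
      | add x y hx hy =>
          simp only [rco_add, map_add, TensorProduct.add_tmul, TensorProduct.tmul_add, hx, hy]
    simp only [LinearMap.coe_comp, Function.comp_apply, LinearEquiv.coe_coe,
      LinearMap.id_apply]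
    rw [key R, hR.qt4r, ract_one]
  · -- bicomod
    apply LinearMap.ext; intro m
    have key : ∀ A B : H ⊗[K] H,
        (YDL.rcoactR K H ract B).lTensor H (YDL.lcoactR K H lact A m)
          = (TensorProduct.assoc K H M H)
              ((YDL.lcoactR K H lact A).rTensor H (YDL.rcoactR K H ract B m)) := by
      intro A B
      induction A using TensorProduct.induction_on with
      | zero => simp [lco_zero, lcoR_zero]
      | tmul a b =>
          rw [lco_tmul, LinearMap.lTensor_tmul]
          induction B using TensorProduct.induction_on with
          | zero => simp [rco_zero, rcoR_zero]
          | tmul c d => rw [rco_tmul]; simp [rco_tmul, lco_tmul, bimod]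
          | add x y hx hy =>
              simp only [rco_add, rcoR_add, LinearMap.lTensor_add, LinearMap.add_apply,
                map_add, TensorProduct.tmul_add, hx, hy]
      | add x y hx hy =>
          simp only [lco_add, lcoR_add, LinearMap.rTensor_add, LinearMap.add_apply,
            map_add, hx, hy]
    simp only [LinearMap.coe_comp, Function.comp_apply, LinearEquiv.coe_coe]
    exact key R R
  · -- yd23
    apply TensorProduct.ext'; intro h m
    set F : H ⊗[K] H →ₗ[K] H ⊗[K] M :=
      (TensorProduct.map LinearMap.id (lact ∘ₗ (TensorProduct.mk K H M).flip m))
        ∘ₗ (TensorProduct.comm K H H).toLinearMap with hF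
    have hFt : ∀ x y : H, F (x ⊗ₜ y) = y ⊗ₜ lact (x ⊗ₜ m) := by
      intro x y; simp [hF]
    have keyL : ∀ A Y : H ⊗[K] H,
        (LinearMap.rTensor M (YDL.mu K H))
            ((LinearMap.rTensor M (TensorProduct.comm K H H).toLinearMap)
              ((TensorProduct.assoc K H H M).symm
                ((LinearMap.lTensor H (YDL.lcoactR K H lact A))
                  ((LinearMap.lTensor H lact)
                    ((TensorProduct.assoc K H H M)
                      ((TensorProduct.comm K H H) Y ⊗ₜ[K] m))))))
          = F (A * Y) := by
      intro A Y
      induction Y using TensorProduct.induction_on with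
      | zero => simp
      | tmul c d =>
          induction A using TensorProduct.induction_on with
          | zero => simp [lcoR_zero]
          | tmul a b =>
              simp [lco_tmul, hFt, Algebra.TensorProduct.tmul_mul_tmul, lact_mul]
          | add x y hx hy =>
              simp only [lcoR_add, LinearMap.lTensor_add, LinearMap.add_apply, map_add,
                add_mul, hx, hy]
      | add x y hx hy =>
          simp only [map_add, TensorProduct.add_tmul, mul_add, hx, hy]
    have keyR : ∀ A Y : H ⊗[K] H,
        (TensorProduct.map (YDL.mu K H) lact)
            ((TensorProduct.tensorTensorTensorComm K H H H M)
              (Y ⊗ₜ[K] YDL.lcoactR K H lact A m))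
          = F ((TensorProduct.comm K H H) Y * A) := by
      intro A Y
      induction Y using TensorProduct.induction_on with
      | zero => simp
      | tmul c d =>
          induction A using TensorProduct.induction_on with
          | zero => simp [lco_zero]
          | tmul a b =>
              rw [lco_tmul]
              simp [hFt, Algebra.TensorProduct.tmul_mul_tmul, lact_mul]
          | add x y hx hy =>
              simp only [lco_add, TensorProduct.tmul_add, map_add, mul_add, hx, hy]
      | add x y hx hy =>
          simp only [map_add, TensorProduct.add_tmul, add_mul, hx, hy]
    simp only [LinearMap.coe_comp, Function.comp_apply, LinearEquiv.coe_coe,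
      LinearMap.rTensor_tmul, TensorProduct.map_tmul]
    rw [keyL R (YDL.cm K H h), keyR R (YDL.cm K H h), hR.qt3 h]
  · -- long24
    apply TensorProduct.ext'; intro h m
    have key : ∀ X : H ⊗[K] H,
        YDL.rcoactR K H ract X (lact (h ⊗ₜ m))
          = lact.rTensor H ((TensorProduct.assoc K H M H).symm
              (h ⊗ₜ YDL.rcoactR K H ract X m)) := by
      intro X
      induction X using TensorProduct.induction_on with
      | zero => simp [rco_zero]
      | tmul a b => simp [rco_tmul, bimod]
      | add x y hx hy =>
          simp only [rco_add, TensorProduct.tmul_add, map_add, hx, hy]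
    simp only [LinearMap.coe_comp, Function.comp_apply, LinearEquiv.coe_coe,
      LinearMap.lTensor_tmul]
    exact key R
  · -- yd25
    apply TensorProduct.ext'; intro m h
    set F : H ⊗[K] H →ₗ[K] M ⊗[K] H :=
      TensorProduct.map (ract ∘ₗ TensorProduct.mk K M H m) LinearMap.id with hF
    have hFt : ∀ x y : H, F (x ⊗ₜ y) = ract (m ⊗ₜ x) ⊗ₜ y := by
      intro x y; simp [hF]
    have keyL : ∀ A Y : H ⊗[K] H,
        (LinearMap.lTensor M (YDL.mu K H))
            ((LinearMap.lTensor M (TensorProduct.comm K H H).toLinearMap)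
              ((TensorProduct.assoc K M H H)
                ((LinearMap.rTensor H (YDL.rcoactR K H ract A))
                  ((LinearMap.rTensor H ract)
                    ((TensorProduct.assoc K M H H).symm
                      (m ⊗ₜ[K] (TensorProduct.comm K H H) Y))))))
          = F ((TensorProduct.comm K H H) Y * A) := by
      intro A Y
      induction Y using TensorProduct.induction_on with
      | zero => simp
      | tmul c d =>
          induction A using TensorProduct.induction_on with
          | zero => simp [rcoR_zero]
          | tmul a b =>
              simp [rco_tmul, hFt, Algebra.TensorProduct.tmul_mul_tmul, ract_mul]
          | add x y hx hy =>
              simp only [rcoR_add, LinearMap.rTensor_add, LinearMap.add_apply, map_add,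
                mul_add, hx, hy]
      | add x y hx hy =>
          simp only [map_add, TensorProduct.tmul_add, add_mul, hx, hy]
    have keyR : ∀ A Y : H ⊗[K] H,
        (TensorProduct.map ract (YDL.mu K H))
            ((TensorProduct.tensorTensorTensorComm K M H H H)
              (YDL.rcoactR K H ract A m ⊗ₜ[K] Y))
          = F (A * Y) := by
      intro A Y
      induction Y using TensorProduct.induction_on with
      | zero => simp
      | tmul c d =>
          induction A using TensorProduct.induction_on with
          | zero => simp [rco_zero]
          | tmul a b =>
              rw [rco_tmul]
              simp [hFt, Algebra.TensorProduct.tmul_mul_tmul, ract_mul]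
          | add x y hx hy =>
              simp only [rco_add, TensorProduct.add_tmul, map_add, add_mul, hx, hy]
      | add x y hx hy =>
          simp only [map_add, TensorProduct.tmul_add, mul_add, hx, hy]
    simp only [LinearMap.coe_comp, Function.comp_apply, LinearEquiv.coe_coe,
      LinearMap.lTensor_tmul, TensorProduct.map_tmul]
    rw [keyL R (YDL.cm K H h), keyR R (YDL.cm K H h), hR.qt3 h]
  · -- long26
    apply TensorProduct.ext'; intro m h
    have key : ∀ X : H ⊗[K] H,
        YDL.lcoactR K H lact X (ract (m ⊗ₜ h))
          = ract.lTensor H ((TensorProduct.assoc K H M H)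
              (YDL.lcoactR K H lact X m ⊗ₜ h)) := by
      intro X
      induction X using TensorProduct.induction_on with
      | zero => simp [lco_zero]
      | tmul a b => simp [lco_tmul, bimod]
      | add x y hx hy =>
          simp only [lco_add, TensorProduct.add_tmul, map_add, hx, hy]
    simp only [LinearMap.coe_comp, Function.comp_apply, LinearEquiv.coe_coe,
      LinearMap.rTensor_tmul]
    exact key R
end
end

section
/- Let (H,R) be a triangular Hopf algebra and let M, N be H-bimodules viewed as Yetter-Drinfel'd-Long bimodules via ρˡ(m)=R²⊗R¹▷m, ρʳ(m)=m◁R¹⊗R². Then the braiding is a symmetry: ψ_{N,M}(ψ_{M,N}(m⊗n))=m⊗n for all m∈M, n∈N, where ψ_{M,N}(m⊗n)=R²▷n◁r¹⊗R¹▷m◁r². -/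
noncomputable section
open TensorProduct

section S11Aux
set_option maxHeartbeats 1000000
set_option synthInstance.maxHeartbeats 400000
open YDL
variable (K : Type) [Field K] (H : Type) [Ring H] [HopfAlgebra K H]
variable {M : Type} [AddCommGroup M] [Module K M] {N : Type} [AddCommGroup N] [Module K N]

/-- `(a ⊗ b) ⊗ m ↦ a ▷ (m ◁ b)`. -/
def s11tw (lact : H ⊗[K] M →ₗ[K] M) (ract : M ⊗[K] H →ₗ[K] M) :
    (H ⊗[K] H) ⊗[K] M →ₗ[K] M :=
  lact ∘ₗ ract.lTensor H ∘ₗ (TensorProduct.comm K H M).toLinearMap.lTensor H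
    ∘ₗ (TensorProduct.assoc K H H M).toLinearMap

@[simp] lemma s11tw_tmul (lact : H ⊗[K] M →ₗ[K] M) (ract : M ⊗[K] H →ₗ[K] M)
    (a b : H) (m : M) :
    s11tw K H lact ract ((a ⊗ₜ b) ⊗ₜ m) = lact (a ⊗ₜ ract (m ⊗ₜ b)) := by
  simp [s11tw]

/-- `(p₁ ⊗ p₂) ⊗ (q₁ ⊗ q₂) ↦ p₁q₁ ⊗ q₂p₂`. -/
def s11D : (H ⊗[K] H) ⊗[K] (H ⊗[K] H) →ₗ[K] H ⊗[K] H :=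
  TensorProduct.map (mu K H) (mu K H ∘ₗ (TensorProduct.comm K H H).toLinearMap)
    ∘ₗ (tensorTensorTensorComm K H H H H).toLinearMap

@[simp] lemma s11D_tmul (p₁ p₂ q₁ q₂ : H) :
    s11D K H ((p₁ ⊗ₜ p₂) ⊗ₜ (q₁ ⊗ₜ q₂)) = (p₁ * q₁) ⊗ₜ[K] (q₂ * p₂) := by
  simp [s11D]

def s11big (lactM : H ⊗[K] M →ₗ[K] M) (ractM : M ⊗[K] H →ₗ[K] M)
    (lactN : H ⊗[K] N →ₗ[K] N) (ractN : N ⊗[K] H →ₗ[K] N) :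
    ((H ⊗[K] H) ⊗[K] (H ⊗[K] H)) ⊗[K] (M ⊗[K] N) →ₗ[K] M ⊗[K] N :=
  TensorProduct.map (s11tw K H lactM ractM) (s11tw K H lactN ractN)
    ∘ₗ (tensorTensorTensorComm K (H ⊗[K] H) (H ⊗[K] H) M N).toLinearMap

@[simp] lemma s11big_tmul (lactM : H ⊗[K] M →ₗ[K] M) (ractM : M ⊗[K] H →ₗ[K] M)
    (lactN : H ⊗[K] N →ₗ[K] N) (ractN : N ⊗[K] H →ₗ[K] N)
    (a b : H ⊗[K] H) (m : M) (n : N) :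
    s11big K H lactM ractM lactN ractN ((a ⊗ₜ b) ⊗ₜ (m ⊗ₜ n))
      = s11tw K H lactM ractM (a ⊗ₜ m) ⊗ₜ s11tw K H lactN ractN (b ⊗ₜ n) := by
  simp [s11big]

def s11C : ((H ⊗[K] H) ⊗[K] (H ⊗[K] H)) ⊗[K] ((H ⊗[K] H) ⊗[K] (H ⊗[K] H))
    →ₗ[K] (H ⊗[K] H) ⊗[K] (H ⊗[K] H) :=
  TensorProduct.map (s11D K H) (s11D K H)
    ∘ₗ (tensorTensorTensorComm K (H ⊗[K] H) (H ⊗[K] H) (H ⊗[K] H) (H ⊗[K] H)).toLinearMap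

@[simp] lemma s11C_tmul (a b c d : H ⊗[K] H) :
    s11C K H ((a ⊗ₜ b) ⊗ₜ (c ⊗ₜ d)) = s11D K H (a ⊗ₜ c) ⊗ₜ s11D K H (b ⊗ₜ d) := by
  simp [s11C]

/-- `(a ⊗ b) ⊗ (c ⊗ d) ↦ (b ⊗ c) ⊗ (a ⊗ d)`. -/
def s11sA : (H ⊗[K] H) ⊗[K] (H ⊗[K] H) →ₗ[K] (H ⊗[K] H) ⊗[K] (H ⊗[K] H) :=
  (tensorTensorTensorComm K H H H H).toLinearMap
    ∘ₗ (TensorProduct.comm K H H).toLinearMap.rTensor (H ⊗[K] H)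

@[simp] lemma s11sA_tmul (a b c d : H) :
    s11sA K H ((a ⊗ₜ b) ⊗ₜ (c ⊗ₜ d)) = (b ⊗ₜ c) ⊗ₜ[K] (a ⊗ₜ[K] d) := by
  simp [s11sA]

/-- `(a ⊗ b) ⊗ (c ⊗ d) ↦ (a ⊗ d) ⊗ (b ⊗ c)`. -/
def s11sB : (H ⊗[K] H) ⊗[K] (H ⊗[K] H) →ₗ[K] (H ⊗[K] H) ⊗[K] (H ⊗[K] H) :=
  (tensorTensorTensorComm K H H H H).toLinearMap
    ∘ₗ (TensorProduct.comm K H H).toLinearMap.lTensor (H ⊗[K] H)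

@[simp] lemma s11sB_tmul (a b c d : H) :
    s11sB K H ((a ⊗ₜ b) ⊗ₜ (c ⊗ₜ d)) = (a ⊗ₜ d) ⊗ₜ[K] (b ⊗ₜ[K] c) := by
  simp [s11sB]

lemma s11tw_mul (lact : H ⊗[K] M →ₗ[K] M) (ract : M ⊗[K] H →ₗ[K] M)
    (lact_mul : ∀ (g h : H) (m : M), lact ((g * h) ⊗ₜ m) = lact (g ⊗ₜ lact (h ⊗ₜ m)))
    (ract_mul : ∀ (m : M) (g h : H), ract (m ⊗ₜ (g * h)) = ract (ract (m ⊗ₜ g) ⊗ₜ h))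
    (bimod : ∀ (h : H) (m : M) (g : H),
      ract (lact (h ⊗ₜ m) ⊗ₜ g) = lact (h ⊗ₜ ract (m ⊗ₜ g)))
    (P Q : H ⊗[K] H) (m : M) :
    s11tw K H lact ract (P ⊗ₜ s11tw K H lact ract (Q ⊗ₜ m))
      = s11tw K H lact ract (s11D K H (P ⊗ₜ Q) ⊗ₜ m) := by
  induction P using TensorProduct.induction_on with
  | zero => simp [zero_tmul]
  | add u v hu hv => simp only [add_tmul, map_add, hu, hv]
  | tmul p₁ p₂ =>
    induction Q using TensorProduct.induction_on with
    | zero => simp [zero_tmul, tmul_zero]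
    | add u v hu hv => simp only [LinearMap.add_apply, TensorProduct.mk_apply, LinearMap.flip_apply, add_tmul, tmul_add, map_add, hu, hv]
    | tmul q₁ q₂ => simp [lact_mul, ract_mul, bimod]

lemma s11L3 (lactM : H ⊗[K] M →ₗ[K] M) (ractM : M ⊗[K] H →ₗ[K] M)
    (lactN : H ⊗[K] N →ₗ[K] N) (ractN : N ⊗[K] H →ₗ[K] N)
    (lact_mulM : ∀ (g h : H) (m : M), lactM ((g * h) ⊗ₜ m) = lactM (g ⊗ₜ lactM (h ⊗ₜ m)))
    (ract_mulM : ∀ (m : M) (g h : H), ractM (m ⊗ₜ (g * h)) = ractM (ractM (m ⊗ₜ g) ⊗ₜ h))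
    (bimodM : ∀ (h : H) (m : M) (g : H),
      ractM (lactM (h ⊗ₜ m) ⊗ₜ g) = lactM (h ⊗ₜ ractM (m ⊗ₜ g)))
    (lact_mulN : ∀ (g h : H) (n : N), lactN ((g * h) ⊗ₜ n) = lactN (g ⊗ₜ lactN (h ⊗ₜ n)))
    (ract_mulN : ∀ (n : N) (g h : H), ractN (n ⊗ₜ (g * h)) = ractN (ractN (n ⊗ₜ g) ⊗ₜ h))
    (bimodN : ∀ (h : H) (n : N) (g : H),
      ractN (lactN (h ⊗ₜ n) ⊗ₜ g) = lactN (h ⊗ₜ ractN (n ⊗ₜ g)))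
    (A B : (H ⊗[K] H) ⊗[K] (H ⊗[K] H)) (x : M ⊗[K] N) :
    s11big K H lactM ractM lactN ractN (A ⊗ₜ s11big K H lactM ractM lactN ractN (B ⊗ₜ x))
      = s11big K H lactM ractM lactN ractN (s11C K H (A ⊗ₜ B) ⊗ₜ x) := by
  induction A using TensorProduct.induction_on with
  | zero => simp [zero_tmul]
  | add u v hu hv => simp only [add_tmul, map_add, hu, hv]
  | tmul a b =>
    induction B using TensorProduct.induction_on with
    | zero => simp [zero_tmul, tmul_zero]
    | add u v hu hv => simp only [LinearMap.add_apply, TensorProduct.mk_apply, LinearMap.flip_apply, add_tmul, tmul_add, map_add, hu, hv]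
    | tmul c d =>
      induction x using TensorProduct.induction_on with
      | zero => simp [tmul_zero]
      | add u v hu hv => simp only [tmul_add, map_add, hu, hv]
      | tmul m n =>
        simp only [s11big_tmul, s11C_tmul]
        rw [s11tw_mul K H lactM ractM lact_mulM ract_mulM bimodM,
          s11tw_mul K H lactN ractN lact_mulN ract_mulN bimodN]

lemma s11L4 (P Q P' Q' : H ⊗[K] H) :
    s11C K H (s11sA K H (P ⊗ₜ Q) ⊗ₜ s11sB K H (P' ⊗ₜ Q'))
      = (tensorTensorTensorComm K H H H H)
          (((TensorProduct.comm K H H) P * P') ⊗ₜ ((TensorProduct.comm K H H) Q' * Q)) := by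
  induction P using TensorProduct.induction_on with
  | zero => simp [zero_tmul]
  | add u v hu hv => simp only [add_tmul, map_add, add_mul, tmul_add, hu, hv]
  | tmul a b =>
    induction Q using TensorProduct.induction_on with
    | zero => simp [zero_tmul, tmul_zero]
    | add u v hu hv => simp only [add_tmul, tmul_add, map_add, mul_add, hu, hv]
    | tmul c d =>
      induction P' using TensorProduct.induction_on with
      | zero => simp [zero_tmul, tmul_zero]
      | add u v hu hv => simp only [add_tmul, tmul_add, map_add, mul_add, hu, hv]
      | tmul e f =>
        induction Q' using TensorProduct.induction_on with
        | zero => simp [zero_tmul, tmul_zero]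
        | add u v hu hv => simp only [add_tmul, tmul_add, map_add, add_mul, hu, hv]
        | tmul g h =>
          simp [Algebra.TensorProduct.tmul_mul_tmul]

lemma s11L1 (lactM : H ⊗[K] M →ₗ[K] M) (ractM : M ⊗[K] H →ₗ[K] M)
    (lactN : H ⊗[K] N →ₗ[K] N) (ractN : N ⊗[K] H →ₗ[K] N)
    (bimodM : ∀ (h : H) (m : M) (g : H),
      ractM (lactM (h ⊗ₜ m) ⊗ₜ g) = lactM (h ⊗ₜ ractM (m ⊗ₜ g)))
    (P Q : H ⊗[K] H) (m : M) (n : N) :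
    (TensorProduct.comm K N M)
        (braid K H (lcoactR K H lactM P) ractM lactN (rcoactR K H ractN Q) (m ⊗ₜ n))
      = s11big K H lactM ractM lactN ractN (s11sB K H (P ⊗ₜ Q) ⊗ₜ (m ⊗ₜ n)) := by
  induction P using TensorProduct.induction_on with
  | zero => simp [zero_tmul, braid, lcoactR, rcoactR]
  | add u v hu hv =>
    simp only [braid, lcoactR, rcoactR, LinearMap.coe_comp, Function.comp_apply,
      LinearEquiv.coe_coe, TensorProduct.map_tmul, TensorProduct.mk_apply,
      LinearMap.flip_apply, map_add, add_tmul] at hu hv ⊢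
    simp only [LinearMap.add_apply, TensorProduct.mk_apply, LinearMap.flip_apply, add_tmul, tmul_add, map_add, hu, hv]
  | tmul a b =>
    induction Q using TensorProduct.induction_on with
    | zero => simp [zero_tmul, tmul_zero, braid, lcoactR, rcoactR]
    | add u v hu hv =>
      simp only [braid, lcoactR, rcoactR, LinearMap.coe_comp, Function.comp_apply,
        LinearEquiv.coe_coe, TensorProduct.map_tmul, TensorProduct.mk_apply,
        LinearMap.flip_apply, map_add, add_tmul, tmul_add] at hu hv ⊢
      simp only [LinearMap.add_apply, TensorProduct.mk_apply, LinearMap.flip_apply, add_tmul, tmul_add, map_add, hu, hv]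
    | tmul c d =>
      simp [braid, lcoactR, rcoactR, bimodM]

lemma s11L2 (lactM : H ⊗[K] M →ₗ[K] M) (ractM : M ⊗[K] H →ₗ[K] M)
    (lactN : H ⊗[K] N →ₗ[K] N) (ractN : N ⊗[K] H →ₗ[K] N)
    (bimodN : ∀ (h : H) (n : N) (g : H),
      ractN (lactN (h ⊗ₜ n) ⊗ₜ g) = lactN (h ⊗ₜ ractN (n ⊗ₜ g)))
    (P Q : H ⊗[K] H) (y : N ⊗[K] M) :
    braid K H (lcoactR K H lactN P) ractN lactM (rcoactR K H ractM Q) y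
      = s11big K H lactM ractM lactN ractN
          (s11sA K H (P ⊗ₜ Q) ⊗ₜ (TensorProduct.comm K N M) y) := by
  induction y using TensorProduct.induction_on with
  | zero => simp [tmul_zero]
  | add u v hu hv => simp only [map_add, tmul_add, hu, hv]
  | tmul n m =>
    induction P using TensorProduct.induction_on with
    | zero => simp [zero_tmul, braid, lcoactR, rcoactR]
    | add u v hu hv =>
      simp only [braid, lcoactR, rcoactR, LinearMap.coe_comp, Function.comp_apply,
        LinearEquiv.coe_coe, TensorProduct.map_tmul, TensorProduct.mk_apply,
        LinearMap.flip_apply, map_add, add_tmul] at hu hv ⊢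
      simp only [LinearMap.add_apply, TensorProduct.mk_apply, LinearMap.flip_apply, add_tmul, tmul_add, map_add, hu, hv]
    | tmul a b =>
      induction Q using TensorProduct.induction_on with
      | zero => simp [zero_tmul, tmul_zero, braid, lcoactR, rcoactR]
      | add u v hu hv =>
        simp only [braid, lcoactR, rcoactR, LinearMap.coe_comp, Function.comp_apply,
          LinearEquiv.coe_coe, TensorProduct.map_tmul, TensorProduct.mk_apply,
          LinearMap.flip_apply, map_add, add_tmul, tmul_add] at hu hv ⊢
        simp only [LinearMap.add_apply, TensorProduct.mk_apply, LinearMap.flip_apply, add_tmul, tmul_add, map_add, hu, hv]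
      | tmul c d =>
        simp [braid, lcoactR, rcoactR, bimodN]

end S11Aux

set_option maxHeartbeats 1000000 in
set_option synthInstance.maxHeartbeats 400000 in
/-- over a triangular Hopf algebra the induced braiding on
`H`-bimodules is a symmetry: `ψ_{N,M} ∘ ψ_{M,N} = id`. -/
theorem statement11 (K : Type) [Field K] (H : Type) [Ring H] [HopfAlgebra K H]
    (R : H ⊗[K] H) (hR : YDL.IsTriangular K H R)
    (M N : Type) [AddCommGroup M] [Module K M] [AddCommGroup N] [Module K N]
    (lactM : H ⊗[K] M →ₗ[K] M) (ractM : M ⊗[K] H →ₗ[K] M)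
    (lactN : H ⊗[K] N →ₗ[K] N) (ractN : N ⊗[K] H →ₗ[K] N)
    (lact_oneM : ∀ m : M, lactM (1 ⊗ₜ m) = m)
    (lact_mulM : ∀ (g h : H) (m : M), lactM ((g * h) ⊗ₜ m) = lactM (g ⊗ₜ lactM (h ⊗ₜ m)))
    (ract_oneM : ∀ m : M, ractM (m ⊗ₜ 1) = m)
    (ract_mulM : ∀ (m : M) (g h : H), ractM (m ⊗ₜ (g * h)) = ractM (ractM (m ⊗ₜ g) ⊗ₜ h))
    (bimodM : ∀ (h : H) (m : M) (g : H),
      ractM (lactM (h ⊗ₜ m) ⊗ₜ g) = lactM (h ⊗ₜ ractM (m ⊗ₜ g)))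
    (lact_oneN : ∀ n : N, lactN (1 ⊗ₜ n) = n)
    (lact_mulN : ∀ (g h : H) (n : N), lactN ((g * h) ⊗ₜ n) = lactN (g ⊗ₜ lactN (h ⊗ₜ n)))
    (ract_oneN : ∀ n : N, ractN (n ⊗ₜ 1) = n)
    (ract_mulN : ∀ (n : N) (g h : H), ractN (n ⊗ₜ (g * h)) = ractN (ractN (n ⊗ₜ g) ⊗ₜ h))
    (bimodN : ∀ (h : H) (n : N) (g : H),
      ractN (lactN (h ⊗ₜ n) ⊗ₜ g) = lactN (h ⊗ₜ ractN (n ⊗ₜ g))) :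
    YDL.braid K H (YDL.lcoactR K H lactN R) ractN lactM (YDL.rcoactR K H ractM R)
      ∘ₗ YDL.braid K H (YDL.lcoactR K H lactM R) ractM lactN (YDL.rcoactR K H ractN R)
    = LinearMap.id := by
  apply TensorProduct.ext'
  intro m n
  simp only [LinearMap.coe_comp, Function.comp_apply, LinearMap.id_coe, id_eq]
  rw [s11L2 K H lactM ractM lactN ractN bimodN R R]
  rw [s11L1 K H lactM ractM lactN ractN bimodM R R m n]
  rw [s11L3 K H lactM ractM lactN ractN lact_mulM ract_mulM bimodM lact_mulN ract_mulN bimodN]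
  rw [s11L4 K H R R R R]
  rw [hR.tri.2]
  rw [Algebra.TensorProduct.one_def]
  simp [lact_oneM, ract_oneM, lact_oneN, ract_oneN]
end
end

section
/- Let H be a Hopf algebra with bijective antipode. Suppose H⊗H is a Yetter-Drinfel'd-Long bimodule with left action h▷(k⊗l)=hk⊗l, right action (k⊗l)◁h=k⊗lh, left coaction ρˡ=ρ₁⊗id for some left coaction ρ₁ on H, and right coaction ρʳ=id⊗ρ₂ for some right coaction ρ₂ on H. If the braiding ψ_{H⊗H,H⊗H} is a symmetry, then writing ρˡ(1⊗1)=xᵢ⊗yᵢ⊗1 and ρʳ(1⊗1)=1⊗sᵢ⊗tᵢ, one has xᵢ⊗yᵢ=yᵢ⊗S⁻¹(xᵢ) and sᵢ⊗tᵢ=S⁻¹(tᵢ)⊗sᵢ. -/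
noncomputable section
open TensorProduct

section Aux
variable (K : Type) [Field K] (H : Type) [Ring H] [HopfAlgebra K H]

lemma cu_sa (a : H) : YDL.cu K H (YDL.sa K H a) = YDL.cu K H a := by
  have h1 : (YDL.cu K H ∘ₗ YDL.mu K H ∘ₗ (YDL.sa K H).rTensor H)
      = (YDL.cu K H ∘ₗ YDL.sa K H
        ∘ₗ (TensorProduct.rid K H).toLinearMap ∘ₗ (YDL.cu K H).lTensor H) := by
    apply TensorProduct.ext'
    intro x y
    simp [Bialgebra.counit_mul, mul_comm]
  have h2 := congrArg (YDL.cu K H)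
    (HopfAlgebra.mul_antipode_rTensor_comul_apply (R := K) a)
  have h3 := LinearMap.congr_fun h1 (Coalgebra.comul a)
  simp only [LinearMap.comp_apply] at h2 h3
  rw [h3, Coalgebra.lTensor_counit_comul] at h2
  simpa [Algebra.algebraMap_eq_smul_one] using h2

end Aux

/-- if `H ⊗ H` (with `h ▷ (k⊗l) = hk⊗l`, `(k⊗l) ◁ h = k⊗lh`,
`ρˡ = ρ₁ ⊗ id`, `ρʳ = id ⊗ ρ₂`) is a Yetter–Drinfel'd–Long bimodule whose
braiding is a symmetry, then writing `ρ₁(1) = xᵢ ⊗ yᵢ` and `ρ₂(1) = sᵢ ⊗ tᵢ`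
one has `xᵢ ⊗ yᵢ = yᵢ ⊗ S⁻¹(xᵢ)` and `sᵢ ⊗ tᵢ = S⁻¹(tᵢ) ⊗ sᵢ`. -/
theorem statement12 (K : Type) [Field K] (H : Type) [Ring H] [HopfAlgebra K H]
    (Si : H →ₗ[K] H)
    (hSi : YDL.sa K H ∘ₗ Si = LinearMap.id ∧ Si ∘ₗ YDL.sa K H = LinearMap.id)
    (ρ₁ : H →ₗ[K] H ⊗[K] H) (ρ₂ : H →ₗ[K] H ⊗[K] H)
    (hYD : YDL.IsYDLong K H (H ⊗[K] H) (YDL.lactA K H) (YDL.ractB K H)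
      ((TensorProduct.assoc K H H H).toLinearMap ∘ₗ ρ₁.rTensor H)
      ((TensorProduct.assoc K H H H).symm.toLinearMap ∘ₗ ρ₂.lTensor H))
    (hsym :
      YDL.braid K H ((TensorProduct.assoc K H H H).toLinearMap ∘ₗ ρ₁.rTensor H)
          (YDL.ractB K H) (YDL.lactA K H)
          ((TensorProduct.assoc K H H H).symm.toLinearMap ∘ₗ ρ₂.lTensor H)
      = YDL.braidInv K H Si ((TensorProduct.assoc K H H H).toLinearMap ∘ₗ ρ₁.rTensor H)
          (YDL.ractB K H) (YDL.lactA K H)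
          ((TensorProduct.assoc K H H H).symm.toLinearMap ∘ₗ ρ₂.lTensor H)) :
    ρ₁ 1 = Si.lTensor H ((TensorProduct.comm K H H) (ρ₁ 1))
    ∧ ρ₂ 1 = Si.rTensor H ((TensorProduct.comm K H H) (ρ₂ 1)) := by
  obtain ⟨hS1, hS2⟩ := hSi
  have hcuSi : ∀ h : H, YDL.cu K H (Si h) = YDL.cu K H h := by
    intro h
    have h0 := cu_sa K H (Si h)
    rw [show YDL.sa K H (Si h) = h from LinearMap.congr_fun hS1 h] at h0
    exact h0.symm
  -- the coactions at `1 ⊗ 1` as linear functions of `ρ₁ 1`, `ρ₂ 1`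
  set e₁ : H ⊗[K] H →ₗ[K] H ⊗[K] (H ⊗[K] H) :=
    (TensorProduct.assoc K H H H).toLinearMap ∘ₗ (TensorProduct.mk K (H ⊗[K] H) H).flip 1
    with he₁
  set e₂ : H ⊗[K] H →ₗ[K] (H ⊗[K] H) ⊗[K] H :=
    (TensorProduct.assoc K H H H).symm.toLinearMap ∘ₗ TensorProduct.mk K H (H ⊗[K] H) 1
    with he₂
  set Ttt : (H ⊗[K] H) ⊗[K] (H ⊗[K] H) →ₗ[K] (H ⊗[K] H) ⊗[K] (H ⊗[K] H) :=
    (tensorTensorTensorComm K H H H H).toLinearMap with hTtt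
  set Psi : (H ⊗[K] H) ⊗[K] (H ⊗[K] H) →ₗ[K] (H ⊗[K] H) ⊗[K] (H ⊗[K] H) :=
    TensorProduct.map (Si.lTensor H) (Si.rTensor H) ∘ₗ Ttt
      ∘ₗ TensorProduct.map (TensorProduct.comm K H H).toLinearMap
          (TensorProduct.comm K H H).toLinearMap with hPsi
  have Lmap : TensorProduct.map (YDL.lactA K H) (YDL.ractB K H)
      ∘ₗ (tensorTensorTensorComm K H (H ⊗[K] H) (H ⊗[K] H) H).toLinearMap
      ∘ₗ TensorProduct.map e₁ e₂ = Ttt := by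
    apply TensorProduct.ext_fourfold'
    intro x y s t
    simp [he₁, he₂, hTtt, YDL.lactA, YDL.ractB, tensorTensorTensorComm_tmul]
  have Rmap : TensorProduct.map (YDL.ractB K H) (YDL.lactA K H)
      ∘ₗ (TensorProduct.comm K (H ⊗[K] (H ⊗[K] H)) ((H ⊗[K] H) ⊗[K] H)).toLinearMap
      ∘ₗ (tensorTensorTensorComm K H (H ⊗[K] H) (H ⊗[K] H) H).toLinearMap
      ∘ₗ (TensorProduct.comm K ((H ⊗[K] H) ⊗[K] H) (H ⊗[K] (H ⊗[K] H))).toLinearMap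
      ∘ₗ TensorProduct.map (Si.lTensor (H ⊗[K] H) ∘ₗ e₂) (Si.rTensor (H ⊗[K] H) ∘ₗ e₁)
      = Psi ∘ₗ (TensorProduct.comm K (H ⊗[K] H) (H ⊗[K] H)).toLinearMap := by
    apply TensorProduct.ext_fourfold'
    intro s t x y
    simp [he₁, he₂, hTtt, hPsi, YDL.lactA, YDL.ractB, tensorTensorTensorComm_tmul]
  -- the main equation
  have hb := LinearMap.congr_fun hsym
    ((((1 : H) ⊗ₜ[K] (1 : H))) ⊗ₜ[K] (((1 : H) ⊗ₜ[K] (1 : H))))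
  have hbL := LinearMap.congr_fun Lmap ((ρ₁ 1) ⊗ₜ[K] (ρ₂ 1))
  have hbR := LinearMap.congr_fun Rmap ((ρ₂ 1) ⊗ₜ[K] (ρ₁ 1))
  simp only [YDL.braid, YDL.braidInv, LinearMap.comp_apply, TensorProduct.map_tmul,
    LinearMap.rTensor_tmul, LinearMap.lTensor_tmul, LinearEquiv.coe_coe,
    TensorProduct.mk_apply, LinearMap.flip_apply, TensorProduct.comm_tmul] at hb hbL hbR
  have main : Ttt ((ρ₁ 1) ⊗ₜ[K] (ρ₂ 1)) = Psi ((ρ₁ 1) ⊗ₜ[K] (ρ₂ 1)) := by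
    rw [← hbL, ← hbR]
    exact hb
  -- counit facts
  set f : H ⊗[K] H →ₗ[K] H :=
    (TensorProduct.rid K H).toLinearMap ∘ₗ (YDL.cu K H).lTensor H with hf
  set g : H ⊗[K] H →ₗ[K] H :=
    (TensorProduct.lid K H).toLinearMap ∘ₗ (YDL.cu K H).rTensor H with hg
  have Y1 : YDL.epsBoth K H ∘ₗ (TensorProduct.lid K (H ⊗[K] H)).toLinearMap
      ∘ₗ (YDL.cu K H).rTensor (H ⊗[K] H) ∘ₗ e₁ = YDL.epsBoth K H := by
    apply TensorProduct.ext'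
    intro x y
    simp [he₁, YDL.epsBoth, mul_comm]
  have Y2 : YDL.epsBoth K H ∘ₗ (TensorProduct.rid K (H ⊗[K] H)).toLinearMap
      ∘ₗ (YDL.cu K H).lTensor (H ⊗[K] H) ∘ₗ e₂ = YDL.epsBoth K H := by
    apply TensorProduct.ext'
    intro s t
    simp [he₂, YDL.epsBoth, mul_comm]
  have hEa : YDL.epsBoth K H (ρ₁ 1) = 1 := by
    have hr := congrArg (YDL.epsBoth K H) (LinearMap.congr_fun hYD.lcounit
      (((1 : H) ⊗ₜ[K] (1 : H))))
    have hY := LinearMap.congr_fun Y1 (ρ₁ 1)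
    simp only [LinearMap.comp_apply, LinearEquiv.coe_coe, LinearMap.rTensor_tmul,
      LinearMap.lTensor_tmul, TensorProduct.mk_apply, LinearMap.flip_apply,
      LinearMap.id_apply, he₁, he₂] at hr hY
    rw [← hY, hr]
    simp [YDL.epsBoth]
  have hEb : YDL.epsBoth K H (ρ₂ 1) = 1 := by
    have hr := congrArg (YDL.epsBoth K H) (LinearMap.congr_fun hYD.rcounit
      (((1 : H) ⊗ₜ[K] (1 : H))))
    have hY := LinearMap.congr_fun Y2 (ρ₂ 1)
    simp only [LinearMap.comp_apply, LinearEquiv.coe_coe, LinearMap.rTensor_tmul,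
      LinearMap.lTensor_tmul, TensorProduct.mk_apply, LinearMap.flip_apply,
      LinearMap.id_apply, he₁, he₂] at hr hY
    rw [← hY, hr]
    simp [YDL.epsBoth]
  -- extraction maps
  have X1 : TensorProduct.map f f ∘ₗ Ttt
      = (TensorProduct.rid K (H ⊗[K] H)).toLinearMap
        ∘ₗ (YDL.epsBoth K H).lTensor (H ⊗[K] H) := by
    apply TensorProduct.ext_fourfold'
    intro x y s t
    simp only [hf, hg, hTtt, hPsi, LinearMap.comp_apply, LinearEquiv.coe_coe,
      tensorTensorTensorComm_tmul, TensorProduct.map_tmul, LinearMap.lTensor_tmul,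
      LinearMap.rTensor_tmul, TensorProduct.rid_tmul, TensorProduct.lid_tmul,
      TensorProduct.comm_tmul, YDL.epsBoth, LinearMap.mul'_apply, hcuSi,
      TensorProduct.smul_tmul', TensorProduct.tmul_smul, smul_smul, map_smul]
    try rw [mul_comm]
  have X2 : TensorProduct.map f f ∘ₗ Psi
      = Si.lTensor H ∘ₗ (TensorProduct.comm K H H).toLinearMap
        ∘ₗ (TensorProduct.rid K (H ⊗[K] H)).toLinearMap
        ∘ₗ (YDL.epsBoth K H).lTensor (H ⊗[K] H) := by
    apply TensorProduct.ext_fourfold'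
    intro x y s t
    simp only [hf, hg, hTtt, hPsi, LinearMap.comp_apply, LinearEquiv.coe_coe,
      tensorTensorTensorComm_tmul, TensorProduct.map_tmul, LinearMap.lTensor_tmul,
      LinearMap.rTensor_tmul, TensorProduct.rid_tmul, TensorProduct.lid_tmul,
      TensorProduct.comm_tmul, YDL.epsBoth, LinearMap.mul'_apply, hcuSi,
      TensorProduct.smul_tmul', TensorProduct.tmul_smul, smul_smul, map_smul]
    try rw [mul_comm]
  have X3 : TensorProduct.map g g ∘ₗ Ttt
      = (TensorProduct.lid K (H ⊗[K] H)).toLinearMap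
        ∘ₗ (YDL.epsBoth K H).rTensor (H ⊗[K] H) := by
    apply TensorProduct.ext_fourfold'
    intro x y s t
    simp only [hf, hg, hTtt, hPsi, LinearMap.comp_apply, LinearEquiv.coe_coe,
      tensorTensorTensorComm_tmul, TensorProduct.map_tmul, LinearMap.lTensor_tmul,
      LinearMap.rTensor_tmul, TensorProduct.rid_tmul, TensorProduct.lid_tmul,
      TensorProduct.comm_tmul, YDL.epsBoth, LinearMap.mul'_apply, hcuSi,
      TensorProduct.smul_tmul', TensorProduct.tmul_smul, smul_smul, map_smul]
    try rw [mul_comm]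
  have X4 : TensorProduct.map g g ∘ₗ Psi
      = Si.rTensor H ∘ₗ (TensorProduct.comm K H H).toLinearMap
        ∘ₗ (TensorProduct.lid K (H ⊗[K] H)).toLinearMap
        ∘ₗ (YDL.epsBoth K H).rTensor (H ⊗[K] H) := by
    apply TensorProduct.ext_fourfold'
    intro x y s t
    simp only [hf, hg, hTtt, hPsi, LinearMap.comp_apply, LinearEquiv.coe_coe,
      tensorTensorTensorComm_tmul, TensorProduct.map_tmul, LinearMap.lTensor_tmul,
      LinearMap.rTensor_tmul, TensorProduct.rid_tmul, TensorProduct.lid_tmul,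
      TensorProduct.comm_tmul, YDL.epsBoth, LinearMap.mul'_apply, hcuSi,
      TensorProduct.smul_tmul', TensorProduct.tmul_smul, smul_smul, map_smul]
    try rw [mul_comm]
  constructor
  · have g1 := congrArg (TensorProduct.map f f) main
    have l1 := LinearMap.congr_fun X1 ((ρ₁ 1) ⊗ₜ[K] (ρ₂ 1))
    have l2 := LinearMap.congr_fun X2 ((ρ₁ 1) ⊗ₜ[K] (ρ₂ 1))
    simp only [LinearMap.comp_apply, LinearEquiv.coe_coe, LinearMap.lTensor_tmul,
      TensorProduct.rid_tmul, hEb, one_smul] at l1 l2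
    rw [l1, l2] at g1
    exact g1
  · have g2 := congrArg (TensorProduct.map g g) main
    have l3 := LinearMap.congr_fun X3 ((ρ₁ 1) ⊗ₜ[K] (ρ₂ 1))
    have l4 := LinearMap.congr_fun X4 ((ρ₁ 1) ⊗ₜ[K] (ρ₂ 1))
    simp only [LinearMap.comp_apply, LinearEquiv.coe_coe, LinearMap.rTensor_tmul,
      TensorProduct.lid_tmul, hEa, one_smul] at l3 l4
    rw [l3, l4] at g2
    exact g2
end
end

section
/- Let H be a Hopf algebra with bijective antipode and let H₃=H⊗H be the Yetter-Drinfel'd-Long bimodule with h▷(k⊗l)=hk⊗l, (k⊗l)◁h=k⊗lh, ρˡ(k⊗l)=k₁S(k₃)⊗(k₂⊗l), ρʳ(k⊗l)=(k⊗l₂)⊗S(l₁)l₃. Then the braiding ψ_{H₃,H₃} is a symmetry if and only if H is cocommutative. -/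
noncomputable section
open TensorProduct

section Statement14Aux

open YDL LinearMap

variable (K : Type) [Field K] (H : Type) [Ring H] [HopfAlgebra K H]

/-- `x ↦ 1 ⊗ x`. -/
def auxJ : H →ₗ[K] H ⊗[K] H := TensorProduct.mk K H H 1

/-- `x ↦ x ⊗ 1`. -/
def auxJ' : H →ₗ[K] H ⊗[K] H := (TensorProduct.mk K H H).flip 1

/-- `a ⊗ b ↦ a * S b`. -/
def auxq : H ⊗[K] H →ₗ[K] H := mu K H ∘ₗ (sa K H).lTensor H

def auxC0 : (H ⊗[K] H) ⊗[K] H →ₗ[K] H ⊗[K] H :=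
  (mu K H).lTensor H ∘ₗ ((sa K H).rTensor H).lTensor H ∘ₗ (TensorProduct.assoc K H H H).toLinearMap
    ∘ₗ (TensorProduct.comm K H H).toLinearMap.rTensor H

def auxF2 : (H ⊗[K] H) ⊗[K] H →ₗ[K] H ⊗[K] H :=
  (mu K H).lTensor H ∘ₗ (TensorProduct.assoc K H H H).toLinearMap
    ∘ₗ (TensorProduct.comm K H H).toLinearMap.rTensor H

def epsLid : H ⊗[K] H →ₗ[K] H :=
  (TensorProduct.lid K H).toLinearMap ∘ₗ (cu K H).rTensor H

lemma aux_c2_eq : c2 K H = auxC0 K H ∘ₗ (cm K H).rTensor H ∘ₗ cm K H := rfl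

lemma aux_antipode_one : sa K H 1 = 1 := by
  have h := HopfAlgebra.mul_antipode_rTensor_comul_apply (R := K) (A := H) 1
  simpa [Bialgebra.comul_one, Algebra.TensorProduct.one_def] using h

lemma aux_c1_one : c1 K H 1 = (1 : H) ⊗ₜ[K] (1 : H) := by
  simp [c1, Bialgebra.comul_one, Algebra.TensorProduct.one_def, aux_antipode_one]

lemma aux_c2_one : c2 K H 1 = (1 : H) ⊗ₜ[K] (1 : H) := by
  simp [c2, Bialgebra.comul_one, Algebra.TensorProduct.one_def, aux_antipode_one]

lemma auxq'_comul : (mu K H ∘ₗ (sa K H).rTensor H) ∘ₗ cm K H = eta K H ∘ₗ cu K H := by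
  rw [LinearMap.comp_assoc]; exact HopfAlgebra.mul_antipode_rTensor_comul

lemma auxq_comul : auxq K H ∘ₗ cm K H = eta K H ∘ₗ cu K H := by
  rw [auxq, LinearMap.comp_assoc]
  exact HopfAlgebra.mul_antipode_lTensor_comul

lemma aux_epsR : (eta K H ∘ₗ cu K H).rTensor H ∘ₗ cm K H = auxJ K H := by
  rw [LinearMap.rTensor_comp, LinearMap.comp_assoc, Coalgebra.rTensor_counit_comp_comul]
  ext h
  simp [auxJ]

lemma aux_epsL : (eta K H ∘ₗ cu K H).lTensor H ∘ₗ cm K H = auxJ' K H := by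
  rw [LinearMap.lTensor_comp, LinearMap.comp_assoc, Coalgebra.lTensor_counit_comp_comul]
  ext h
  simp [auxJ']

lemma aux_qdd : ((auxq K H).rTensor H ∘ₗ (cm K H).rTensor H) ∘ₗ cm K H = auxJ K H := by
  rw [← LinearMap.rTensor_comp, auxq_comul, aux_epsR]

lemma aux_nat1 : ((cm K H).rTensor H).lTensor H ∘ₗ (TensorProduct.assoc K H H H).toLinearMap
    = (TensorProduct.assoc K H (H ⊗[K] H) H).toLinearMap ∘ₗ ((cm K H).lTensor H).rTensor H := by
  apply TensorProduct.ext_threefold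
  intro x y z
  simp

lemma aux_keyF : LinearMap.mul' K (H ⊗[K] H) ∘ₗ (auxJ K H).rTensor (H ⊗[K] H)
      ∘ₗ (auxC0 K H).lTensor H ∘ₗ (TensorProduct.assoc K H (H ⊗[K] H) H).toLinearMap
      ∘ₗ (TensorProduct.assoc K H H H).toLinearMap.rTensor H
    = auxF2 K H ∘ₗ ((auxq K H).rTensor H).rTensor H := by
  apply TensorProduct.ext_fourfold
  intro a b d c
  simp [auxJ, auxC0, auxF2, auxq, Algebra.TensorProduct.tmul_mul_tmul, mul_assoc]

lemma aux_keyF2 : auxF2 K H ∘ₗ (auxJ K H).rTensor H = LinearMap.id := by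
  apply TensorProduct.ext'
  intro x c
  simp [auxJ, auxF2]

/-- The crucial Hopf-algebraic identity `∑ (1 ⊗ t₁) · c2 t₂ = Δ t`. -/
lemma aux_crux (t : H) :
    LinearMap.mul' K (H ⊗[K] H) (TensorProduct.map (auxJ K H) (c2 K H) (cm K H t)) = cm K H t := by
  have e1 : TensorProduct.map (auxJ K H) (c2 K H) (cm K H t)
      = (auxJ K H).rTensor (H ⊗[K] H) ((c2 K H).lTensor H (cm K H t)) := by
    have h := LinearMap.congr_fun
      (LinearMap.rTensor_comp_lTensor (f := auxJ K H) (g := c2 K H)).symm ((cm K H) t)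
    simp only [LinearMap.comp_apply] at h
    exact h
  have e2 : (c2 K H).lTensor H (cm K H t)
      = (auxC0 K H).lTensor H
          (((cm K H).rTensor H).lTensor H ((cm K H).lTensor H (cm K H t))) := by
    rw [aux_c2_eq]
    simp only [LinearMap.lTensor_comp, LinearMap.comp_apply]
  have e3 : (cm K H).lTensor H (cm K H t)
      = (TensorProduct.assoc K H H H) ((cm K H).rTensor H (cm K H t)) :=
    (Coalgebra.coassoc_apply t).symm
  have e4 : ((cm K H).rTensor H).lTensor H
        ((TensorProduct.assoc K H H H) ((cm K H).rTensor H (cm K H t)))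
      = (TensorProduct.assoc K H (H ⊗[K] H) H)
          (((cm K H).lTensor H).rTensor H ((cm K H).rTensor H (cm K H t))) := by
    have h := LinearMap.congr_fun (aux_nat1 K H) ((cm K H).rTensor H (cm K H t))
    simpa using h
  have e5 : ((cm K H).lTensor H).rTensor H ((cm K H).rTensor H (cm K H t))
      = (TensorProduct.assoc K H H H).toLinearMap.rTensor H
          (((cm K H).rTensor H).rTensor H ((cm K H).rTensor H (cm K H t))) := by
    rw [← LinearMap.comp_apply, ← LinearMap.rTensor_comp, ← Coalgebra.coassoc]
    simp only [LinearMap.rTensor_comp, LinearMap.comp_apply]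
  have e7 : ((auxq K H).rTensor H).rTensor H
        (((cm K H).rTensor H).rTensor H ((cm K H).rTensor H (cm K H t)))
      = (auxJ K H).rTensor H ((cm K H) t) := by
    rw [← LinearMap.comp_apply, ← LinearMap.comp_apply, ← LinearMap.rTensor_comp,
      ← LinearMap.rTensor_comp, aux_qdd]
  have e6 := LinearMap.congr_fun (aux_keyF K H)
      (((cm K H).rTensor H).rTensor H ((cm K H).rTensor H (cm K H t)))
  simp only [LinearMap.comp_apply, LinearEquiv.coe_coe] at e6
  have e8 := LinearMap.congr_fun (aux_keyF2 K H) ((cm K H) t)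
  simp only [LinearMap.comp_apply, LinearMap.id_apply] at e8
  rw [e1, e2, e3, e4, e5]
  rw [e6, e7, e8]

lemma aux_eE : (mu K H).rTensor H ∘ₗ (TensorProduct.assoc K H H H).symm.toLinearMap
      ∘ₗ ((sa K H).rTensor H).lTensor H ∘ₗ (TensorProduct.assoc K H H H).toLinearMap
    = (auxq K H).rTensor H := by
  apply TensorProduct.ext_threefold
  intro a b c
  simp [auxq]

lemma aux_c1_cocom (hc : (TensorProduct.comm K H H).toLinearMap ∘ₗ cm K H = cm K H) (k : H) :
    c1 K H k = (1 : H) ⊗ₜ[K] k := by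
  have h1 : c1 K H k
      = (mu K H).rTensor H ((TensorProduct.assoc K H H H).symm
          (((sa K H).rTensor H).lTensor H
            ((TensorProduct.comm K H H).toLinearMap.lTensor H
              ((cm K H).lTensor H ((cm K H) k))))) := by
    simp only [c1, LinearMap.comp_apply, LinearMap.lTensor_comp, LinearEquiv.coe_coe]
  rw [h1]
  rw [show (TensorProduct.comm K H H).toLinearMap.lTensor H ((cm K H).lTensor H ((cm K H) k))
      = (((TensorProduct.comm K H H).toLinearMap ∘ₗ cm K H).lTensor H) ((cm K H) k) by
    rw [LinearMap.lTensor_comp]; rfl]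
  rw [hc]
  rw [← Coalgebra.coassoc_apply k]
  have h2 := LinearMap.congr_fun (aux_eE K H) ((cm K H).rTensor H ((cm K H) k))
  simp only [LinearMap.comp_apply, LinearEquiv.coe_coe] at h2
  rw [h2]
  rw [show ((auxq K H).rTensor H) ((cm K H).rTensor H ((cm K H) k))
      = (((auxq K H ∘ₗ cm K H)).rTensor H) ((cm K H) k) by
    rw [LinearMap.rTensor_comp]; rfl]
  rw [auxq_comul]
  have h3 := LinearMap.congr_fun (aux_epsR K H) k
  simp only [LinearMap.comp_apply] at h3
  rw [h3]
  simp [auxJ]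

lemma aux_c2_cocom (hc : (TensorProduct.comm K H H).toLinearMap ∘ₗ cm K H = cm K H) (l : H) :
    c2 K H l = l ⊗ₜ[K] (1 : H) := by
  have h1 : c2 K H l
      = (mu K H).lTensor H (((sa K H).rTensor H).lTensor H
          ((TensorProduct.assoc K H H H)
            ((TensorProduct.comm K H H).toLinearMap.rTensor H
              ((cm K H).rTensor H ((cm K H) l))))) := by
    simp only [c2, LinearMap.comp_apply, LinearEquiv.coe_coe]
  rw [h1]
  rw [show (TensorProduct.comm K H H).toLinearMap.rTensor H ((cm K H).rTensor H ((cm K H) l))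
      = (((TensorProduct.comm K H H).toLinearMap ∘ₗ cm K H).rTensor H) ((cm K H) l) by
    rw [LinearMap.rTensor_comp]; rfl]
  rw [hc]
  rw [Coalgebra.coassoc_apply l]
  rw [show (mu K H).lTensor H (((sa K H).rTensor H).lTensor H ((cm K H).lTensor H ((cm K H) l)))
      = ((mu K H ∘ₗ (sa K H).rTensor H) ∘ₗ cm K H).lTensor H ((cm K H) l) by
    simp only [LinearMap.lTensor_comp, LinearMap.comp_apply]]
  rw [auxq'_comul]
  have h3 := LinearMap.congr_fun (aux_epsL K H) l
  simp only [LinearMap.comp_apply] at h3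
  rw [h3]
  simp [auxJ']

lemma aux_epsLid_one_tmul (x : H) : epsLid K H ((1 : H) ⊗ₜ[K] x) = x := by
  simp [epsLid]

lemma aux_keyT : TensorProduct.map (lactA K H) (ractB K H)
      ∘ₗ (tensorTensorTensorComm K H (H ⊗[K] H) (H ⊗[K] H) H).toLinearMap
      ∘ₗ TensorProduct.mk K (H ⊗[K] (H ⊗[K] H)) ((H ⊗[K] H) ⊗[K] H)
          ((1 : H) ⊗ₜ[K] ((1 : H) ⊗ₜ[K] (1 : H)))
    = TensorProduct.map LinearMap.id (TensorProduct.mk K H H 1) := by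
  apply TensorProduct.ext_threefold
  intro u v w
  simp [lactA, ractB]

lemma aux_Dlem : TensorProduct.map (epsLid K H) (epsLid K H)
      ∘ₗ TensorProduct.map LinearMap.id (TensorProduct.mk K H H 1)
      ∘ₗ (TensorProduct.assoc K H H H).symm.toLinearMap
      ∘ₗ TensorProduct.mk K H (H ⊗[K] H) 1
    = LinearMap.id := by
  apply TensorProduct.ext'
  intro u v
  simp [epsLid]

lemma aux_extract_c2
    (hpsi : braid K H (lcoactA K H) (ractB K H) (lactA K H) (rcoactB K H)
        ∘ₗ braid K H (lcoactA K H) (ractB K H) (lactA K H) (rcoactB K H) = LinearMap.id)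
    (l : H) :
    c2 K H l = l ⊗ₜ[K] (1 : H) := by
  have hA : braid K H (lcoactA K H) (ractB K H) (lactA K H) (rcoactB K H)
      (((1 : H) ⊗ₜ[K] l) ⊗ₜ[K] ((1 : H) ⊗ₜ[K] (1 : H)))
      = ((1 : H) ⊗ₜ[K] (1 : H)) ⊗ₜ[K] ((1 : H) ⊗ₜ[K] l) := by
    simp [braid, lcoactA, rcoactB, lactA, ractB, aux_c1_one, aux_c2_one]
  have hB : braid K H (lcoactA K H) (ractB K H) (lactA K H) (rcoactB K H)
      (((1 : H) ⊗ₜ[K] (1 : H)) ⊗ₜ[K] ((1 : H) ⊗ₜ[K] l))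
      = TensorProduct.map LinearMap.id (TensorProduct.mk K H H 1)
          (rcoactB K H ((1 : H) ⊗ₜ[K] l)) := by
    have h0 : braid K H (lcoactA K H) (ractB K H) (lactA K H) (rcoactB K H)
        (((1 : H) ⊗ₜ[K] (1 : H)) ⊗ₜ[K] ((1 : H) ⊗ₜ[K] l))
        = (TensorProduct.map (lactA K H) (ractB K H)
            ∘ₗ (tensorTensorTensorComm K H (H ⊗[K] H) (H ⊗[K] H) H).toLinearMap
            ∘ₗ TensorProduct.mk K (H ⊗[K] (H ⊗[K] H)) ((H ⊗[K] H) ⊗[K] H)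
                ((1 : H) ⊗ₜ[K] ((1 : H) ⊗ₜ[K] (1 : H))))
            (rcoactB K H ((1 : H) ⊗ₜ[K] l)) := by
      simp only [braid, LinearMap.comp_apply, TensorProduct.map_tmul,
        TensorProduct.mk_apply]
      congr 2
      simp [lcoactA, aux_c1_one]
    rw [h0, aux_keyT]
  have h1 := LinearMap.congr_fun hpsi (((1 : H) ⊗ₜ[K] l) ⊗ₜ[K] ((1 : H) ⊗ₜ[K] (1 : H)))
  simp only [LinearMap.comp_apply, LinearMap.id_apply] at h1
  rw [hA, hB] at h1
  have h2 : rcoactB K H ((1 : H) ⊗ₜ[K] l)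
      = (TensorProduct.assoc K H H H).symm ((1 : H) ⊗ₜ[K] c2 K H l) := by
    simp [rcoactB]
  rw [h2] at h1
  have h3 := congrArg (TensorProduct.map (epsLid K H) (epsLid K H)) h1
  have h4 := LinearMap.congr_fun (aux_Dlem K H) (c2 K H l)
  simp only [LinearMap.comp_apply, LinearMap.id_apply, TensorProduct.mk_apply,
    LinearEquiv.coe_coe] at h4
  rw [h4] at h3
  rw [h3]
  simp [epsLid]

lemma aux_commJJ : LinearMap.mul' K (H ⊗[K] H) ∘ₗ TensorProduct.map (auxJ K H) (auxJ' K H)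
    = (TensorProduct.comm K H H).toLinearMap := by
  apply TensorProduct.ext'
  intro a b
  simp [auxJ, auxJ', Algebra.TensorProduct.tmul_mul_tmul]

lemma aux_braid_cocom (hc1 : ∀ k : H, c1 K H k = (1 : H) ⊗ₜ[K] k)
    (hc2 : ∀ l : H, c2 K H l = l ⊗ₜ[K] (1 : H)) :
    braid K H (lcoactA K H) (ractB K H) (lactA K H) (rcoactB K H)
        ∘ₗ braid K H (lcoactA K H) (ractB K H) (lactA K H) (rcoactB K H)
      = LinearMap.id := by
  have hb : ∀ (k l g h : H),
      braid K H (lcoactA K H) (ractB K H) (lactA K H) (rcoactB K H)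
        ((k ⊗ₜ[K] l) ⊗ₜ[K] (g ⊗ₜ[K] h)) = (g ⊗ₜ[K] h) ⊗ₜ[K] (k ⊗ₜ[K] l) := by
    intro k l g h
    simp [braid, lcoactA, rcoactB, lactA, ractB, hc1, hc2]
  apply TensorProduct.ext_fourfold'
  intro k l g h
  simp [hb]

end Statement14Aux

/-- the braiding `ψ_{H₃,H₃}` is a symmetry iff `H` is
cocommutative. -/
theorem statement14 (K : Type) [Field K] (H : Type) [Ring H] [HopfAlgebra K H]
    (hS : Function.Bijective (YDL.sa K H)) :
    YDL.braid K H (YDL.lcoactA K H) (YDL.ractB K H) (YDL.lactA K H) (YDL.rcoactB K H)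
        ∘ₗ YDL.braid K H (YDL.lcoactA K H) (YDL.ractB K H) (YDL.lactA K H) (YDL.rcoactB K H)
      = LinearMap.id
    ↔ ∀ h : H, (TensorProduct.comm K H H) (YDL.cm K H h) = YDL.cm K H h := by
  constructor
  · intro hpsi h
    have hc2map : YDL.c2 K H = auxJ' K H := by
      ext l
      rw [aux_extract_c2 K H hpsi l]
      simp [auxJ']
    have h1 := LinearMap.congr_fun (aux_commJJ K H).symm ((YDL.cm K H) h)
    simp only [LinearMap.comp_apply, LinearEquiv.coe_coe] at h1
    rw [h1, ← hc2map, aux_crux K H h]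
  · intro hc
    have hcm : (TensorProduct.comm K H H).toLinearMap ∘ₗ YDL.cm K H = YDL.cm K H := by
      ext h
      simpa using hc h
    exact aux_braid_cocom K H (aux_c1_cocom K H hcm) (aux_c2_cocom K H hcm)
end
end

section
/- Let H be a Hopf algebra with bijective antipode and suppose (H,·,ρ) is a left-left Yetter-Drinfel'd module over H where the left action is the multiplication of H. If the Yetter-Drinfel'd braiding ψ(k⊗g)=k₍₋₁₎g⊗k₍₀₎ satisfies ψ²=id, then there exists R∈H⊗H such that (H,R) is a triangular Hopf algebra and ρ(k)=R²⊗R¹k for all k∈H; in particular the flip of R equals ρ(1). -/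
noncomputable section
open TensorProduct

set_option maxHeartbeats 1000000
set_option synthInstance.maxHeartbeats 400000
/-- if `(H, ·, ρ)` is a left-left Yetter–Drinfel'd module with
the multiplication as action and `ψ(k ⊗ g) = k₍₋₁₎ g ⊗ k₍₀₎` satisfies
`ψ² = id`, then there is `R` making `(H, R)` triangular and
`ρ(a) = R² ⊗ R¹ a`; in particular `τ(R) = ρ(1)`. -/
theorem statement15 (K : Type) [Field K] (H : Type) [Ring H] [HopfAlgebra K H]
    (hS : Function.Bijective (YDL.sa K H))
    (ρ : H →ₗ[K] H ⊗[K] H)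
    (hco1 : (TensorProduct.assoc K H H H).toLinearMap ∘ₗ (YDL.cm K H).rTensor H ∘ₗ ρ
      = ρ.lTensor H ∘ₗ ρ)
    (hco2 : (TensorProduct.lid K H).toLinearMap ∘ₗ (YDL.cu K H).rTensor H ∘ₗ ρ
      = LinearMap.id)
    (hyd : (YDL.mu K H).rTensor H ∘ₗ (TensorProduct.comm K H H).toLinearMap.rTensor H
        ∘ₗ (TensorProduct.assoc K H H H).symm.toLinearMap ∘ₗ ρ.lTensor H
        ∘ₗ (YDL.mu K H).lTensor H ∘ₗ (TensorProduct.assoc K H H H).toLinearMap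
        ∘ₗ (TensorProduct.comm K H H).toLinearMap.rTensor H ∘ₗ (YDL.cm K H).rTensor H
      = TensorProduct.map (YDL.mu K H) (YDL.mu K H)
        ∘ₗ (TensorProduct.tensorTensorTensorComm K H H H H).toLinearMap
        ∘ₗ TensorProduct.map (YDL.cm K H) ρ)
    (hpsi : ((YDL.mu K H).rTensor H ∘ₗ (TensorProduct.assoc K H H H).symm.toLinearMap
        ∘ₗ (TensorProduct.comm K H H).toLinearMap.lTensor H
        ∘ₗ (TensorProduct.assoc K H H H).toLinearMap ∘ₗ ρ.rTensor H)
      ∘ₗ ((YDL.mu K H).rTensor H ∘ₗ (TensorProduct.assoc K H H H).symm.toLinearMap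
        ∘ₗ (TensorProduct.comm K H H).toLinearMap.lTensor H
        ∘ₗ (TensorProduct.assoc K H H H).toLinearMap ∘ₗ ρ.rTensor H)
      = LinearMap.id) :
    ∃ R : H ⊗[K] H, YDL.IsTriangular K H R
      ∧ (∀ a : H, ρ a = (TensorProduct.comm K H H) R * ((1 : H) ⊗ₜ[K] a))
      ∧ (TensorProduct.comm K H H) R = ρ 1 := by
  classical
  set W : H ⊗[K] H := ρ 1 with hWdef
  set R : H ⊗[K] H := (TensorProduct.comm K H H) W with hRdef
  clear_value W
  clear_value R
  set Ψ : H ⊗[K] H →ₗ[K] H ⊗[K] H :=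
    (YDL.mu K H).rTensor H ∘ₗ (TensorProduct.assoc K H H H).symm.toLinearMap
      ∘ₗ (TensorProduct.comm K H H).toLinearMap.lTensor H
      ∘ₗ (TensorProduct.assoc K H H H).toLinearMap ∘ₗ ρ.rTensor H with hΨdef
  have psipsi : ∀ u : H ⊗[K] H, Ψ (Ψ u) = u := by
    intro u
    have := LinearMap.congr_fun hpsi u
    simpa using this
  have commcomm : ∀ u : H ⊗[K] H,
      (TensorProduct.comm K H H) ((TensorProduct.comm K H H) u) = u := by
    intro u
    induction u using TensorProduct.induction_on with
    | zero => simp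
    | tmul x y => simp
    | add a b ha hb => simp [map_add, ha, hb]
  have psi_tmul : ∀ x y : H, Ψ (x ⊗ₜ[K] y) = ρ x * (y ⊗ₜ[K] (1 : H)) := by
    intro x y
    rw [hΨdef]
    simp only [LinearMap.coe_comp, Function.comp_apply, LinearEquiv.coe_coe,
      LinearMap.rTensor_tmul]
    generalize ρ x = u
    induction u using TensorProduct.induction_on with
    | zero => simp
    | tmul p q =>
      simp [Algebra.TensorProduct.tmul_mul_tmul]
    | add a b ha hb => simp [add_tmul, map_add, ha, hb, add_mul]
  have psiW : Ψ W = (1 : H) ⊗ₜ[K] (1 : H) := by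
    have h0 : Ψ ((1 : H) ⊗ₜ[K] (1 : H)) = W := by
      rw [psi_tmul, ← Algebra.TensorProduct.one_def, mul_one]
      exact hWdef.symm
    calc Ψ W = Ψ (Ψ ((1 : H) ⊗ₜ[K] (1 : H))) := by rw [h0]
      _ = (1 : H) ⊗ₜ[K] (1 : H) := psipsi _
  have L0 : ∀ (u : H ⊗[K] H) (a : H),
      Ψ (u * ((1 : H) ⊗ₜ[K] a)) = Ψ u * (a ⊗ₜ[K] (1 : H)) := by
    intro u a
    induction u using TensorProduct.induction_on with
    | zero => simp [zero_mul]
    | tmul x y =>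
      rw [Algebra.TensorProduct.tmul_mul_tmul, mul_one, psi_tmul, psi_tmul,
        mul_assoc, Algebra.TensorProduct.tmul_mul_tmul, one_mul]
    | add a b ha hb => simp [add_mul, map_add, ha, hb]
  have claimA : ∀ a : H, ρ a = W * ((1 : H) ⊗ₜ[K] a) := by
    intro a
    have h1 : Ψ (W * ((1 : H) ⊗ₜ[K] a)) = a ⊗ₜ[K] (1 : H) := by
      rw [L0, psiW, ← Algebra.TensorProduct.one_def, one_mul]
    have h2 : W * ((1 : H) ⊗ₜ[K] a) = Ψ (a ⊗ₜ[K] (1 : H)) := by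
      rw [← h1, psipsi]
    rw [h2, psi_tmul, ← Algebra.TensorProduct.one_def, mul_one]
  have psi_eq : ∀ u : H ⊗[K] H, Ψ u = W * (TensorProduct.comm K H H) u := by
    intro u
    induction u using TensorProduct.induction_on with
    | zero => simp
    | tmul x y =>
      rw [psi_tmul, claimA x, TensorProduct.comm_tmul, mul_assoc,
        Algebra.TensorProduct.tmul_mul_tmul, one_mul, mul_one]
    | add a b ha hb => simp [map_add, ha, hb, mul_add]
  have hWR : W * R = 1 := by
    have := psiW
    rw [psi_eq] at this
    rw [← hRdef] at this
    rw [this, Algebra.TensorProduct.one_def]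
  -- the algebraic flip
  have commAlg : ∀ u : H ⊗[K] H,
      (TensorProduct.comm K H H) u = (Algebra.TensorProduct.comm K H H) u := by
    intro u
    induction u using TensorProduct.induction_on with
    | zero => simp
    | tmul x y => simp [Algebra.TensorProduct.comm_tmul]
    | add a b ha hb => simp [map_add, ha, hb]
  have hRW : R * W = 1 := by
    have h := congrArg (Algebra.TensorProduct.comm K H H) hWR
    rw [map_mul, map_one, ← commAlg, ← commAlg, hRdef, commcomm, ← hRdef] at h
    exact h
  -- Ψ (Δ h) = Δ h * W  from the Yetter–Drinfel'd condition at h ⊗ 1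
  have gmul : ∀ u v : H ⊗[K] H,
      TensorProduct.map (YDL.mu K H) (YDL.mu K H)
        ((TensorProduct.tensorTensorTensorComm K H H H H) (u ⊗ₜ[K] v)) = u * v := by
    intro u v
    induction u using TensorProduct.induction_on with
    | zero => simp [zero_mul]
    | tmul a b =>
      induction v using TensorProduct.induction_on with
      | zero => simp [mul_zero]
      | tmul p q => simp [Algebra.TensorProduct.tmul_mul_tmul]
      | add c d hc hd => simp [tmul_add, map_add, hc, hd, mul_add]
    | add c d hc hd => simp [add_tmul, map_add, hc, hd, add_mul]
  have glhs : ∀ v : H ⊗[K] H,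
      (YDL.mu K H).rTensor H ((TensorProduct.comm K H H).toLinearMap.rTensor H
        ((TensorProduct.assoc K H H H).symm ((ρ.lTensor H)
          ((YDL.mu K H).lTensor H ((TensorProduct.assoc K H H H)
            (v ⊗ₜ[K] (1 : H)))))))
        = Ψ ((TensorProduct.comm K H H) v) := by
    intro v
    induction v using TensorProduct.induction_on with
    | zero => simp
    | tmul b a =>
      rw [TensorProduct.comm_tmul, psi_tmul, TensorProduct.assoc_tmul,
        LinearMap.lTensor_tmul, LinearMap.mul'_apply, mul_one, LinearMap.lTensor_tmul]
      generalize ρ a = w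
      induction w using TensorProduct.induction_on with
      | zero => simp [zero_mul]
      | tmul p q => simp [Algebra.TensorProduct.tmul_mul_tmul]
      | add c d hc hd => simp [tmul_add, map_add, hc, hd, add_mul]
    | add c d hc hd => simp [add_tmul, map_add, hc, hd]
  have hyd1 : ∀ h : H, Ψ (YDL.cm K H h) = YDL.cm K H h * W := by
    intro h
    have H1 := LinearMap.congr_fun hyd (h ⊗ₜ[K] (1 : H))
    simp only [LinearMap.coe_comp, Function.comp_apply, LinearEquiv.coe_coe] at H1
    rw [LinearMap.rTensor_tmul, LinearMap.rTensor_tmul] at H1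
    simp only [LinearEquiv.coe_coe] at H1
    rw [glhs ((TensorProduct.comm K H H) (YDL.cm K H h)), commcomm] at H1
    rw [TensorProduct.map_tmul, ← hWdef, gmul] at H1
    exact H1
  have qt3' : ∀ h : H,
      YDL.cm K H h * W = W * (TensorProduct.comm K H H) (YDL.cm K H h) := by
    intro h
    rw [← hyd1 h, psi_eq]
  have qt3 : ∀ h : H,
      (TensorProduct.comm K H H) (YDL.cm K H h) * R = R * YDL.cm K H h := by
    intro h
    have e := qt3' h
    calc (TensorProduct.comm K H H) (YDL.cm K H h) * R
        = (R * W) * ((TensorProduct.comm K H H) (YDL.cm K H h) * R) := by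
          rw [hRW, one_mul]
      _ = R * (W * (TensorProduct.comm K H H) (YDL.cm K H h)) * R := by
          rw [mul_assoc, mul_assoc, mul_assoc]
      _ = R * (YDL.cm K H h * W) * R := by rw [← e]
      _ = R * YDL.cm K H h * (W * R) := by rw [mul_assoc, mul_assoc, mul_assoc]
      _ = R * YDL.cm K H h := by rw [hWR, mul_one]
  -- counit conditions
  have qt4r : (TensorProduct.rid K H) ((YDL.cu K H).lTensor H R) = 1 := by
    have key : ∀ u : H ⊗[K] H,
        (TensorProduct.rid K H) ((YDL.cu K H).lTensor H ((TensorProduct.comm K H H) u))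
          = (TensorProduct.lid K H) ((YDL.cu K H).rTensor H u) := by
      intro u
      induction u using TensorProduct.induction_on with
      | zero => simp
      | tmul x y => simp
      | add a b ha hb => simp [map_add, ha, hb]
    have h2 := LinearMap.congr_fun hco2 (1 : H)
    simp only [LinearMap.coe_comp, Function.comp_apply, LinearEquiv.coe_coe,
      LinearMap.id_apply] at h2
    rw [hRdef, key W, hWdef]
    exact h2
  -- algebra homomorphism  x ⊗ y ↦ x · η(ε y)
  have hcomm : ∀ (x y : H), Commute ((AlgHom.id K H) x)
      (((Algebra.ofId K H).comp (Bialgebra.counitAlgHom K H)) y) := by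
    intro x y
    simp only [AlgHom.id_apply, AlgHom.comp_apply, Algebra.ofId_apply]
    exact (Algebra.commutes _ _).symm
  set φ : H ⊗[K] H →ₐ[K] H :=
    Algebra.TensorProduct.lift (AlgHom.id K H)
      ((Algebra.ofId K H).comp (Bialgebra.counitAlgHom K H)) hcomm with hφdef
  have hφ : ∀ u : H ⊗[K] H,
      φ u = (TensorProduct.rid K H) ((YDL.cu K H).lTensor H u) := by
    intro u
    induction u using TensorProduct.induction_on with
    | zero => simp
    | tmul a b =>
      rw [hφdef]
      simp only [Algebra.TensorProduct.lift_tmul, AlgHom.id_apply, AlgHom.comp_apply,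
        Algebra.ofId_apply, Bialgebra.counitAlgHom_apply, LinearMap.lTensor_tmul,
        TensorProduct.rid_tmul, Algebra.smul_def]
      exact (Algebra.commutes _ _).symm
    | add a b ha hb => simp [map_add, ha, hb]
  have qt4l : (TensorProduct.lid K H) ((YDL.cu K H).rTensor H R) = 1 := by
    have keyl : ∀ u : H ⊗[K] H,
        (TensorProduct.lid K H) ((YDL.cu K H).rTensor H ((TensorProduct.comm K H H) u))
          = (TensorProduct.rid K H) ((YDL.cu K H).lTensor H u) := by
      intro u
      induction u using TensorProduct.induction_on with
      | zero => simp
      | tmul x y => simp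
      | add a b ha hb => simp [map_add, ha, hb]
    have hφR : φ R = 1 := by rw [hφ]; exact qt4r
    have hφW : φ W = 1 := by
      have := congrArg φ hWR
      rw [map_mul, map_one, hφR, mul_one] at this
      exact this
    have : (TensorProduct.lid K H) ((YDL.cu K H).rTensor H R)
        = (TensorProduct.rid K H) ((YDL.cu K H).lTensor H W) := by
      rw [hRdef]; exact keyl W
    rw [this, ← hφ, hφW]
  -- (Δ ⊗ id) W = i23 W * i13 W  from coassociativity at 1
  have hco1' : (TensorProduct.assoc K H H H) ((YDL.cm K H).rTensor H W)
      = ρ.lTensor H W := by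
    have := LinearMap.congr_fun hco1 (1 : H)
    simpa only [LinearMap.coe_comp, Function.comp_apply, LinearEquiv.coe_coe,
      ← hWdef] using this
  have lemK0 : ∀ (v : H ⊗[K] H) (x y : H),
      (TensorProduct.assoc K H H H).symm (x ⊗ₜ[K] (v * ((1 : H) ⊗ₜ[K] y)))
        = YDL.i23 K H v * YDL.i13 K H (x ⊗ₜ[K] y) := by
    intro v x y
    induction v using TensorProduct.induction_on with
    | zero => simp [zero_mul, YDL.i23, YDL.i13]
    | tmul p q =>
      simp [YDL.i23, YDL.i13, Algebra.TensorProduct.tmul_mul_tmul]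
    | add a b ha hb => simp [add_mul, tmul_add, map_add, ha, hb, YDL.i23, YDL.i13]
  have lemK : ∀ u : H ⊗[K] H,
      (TensorProduct.assoc K H H H).symm (ρ.lTensor H u)
        = YDL.i23 K H W * YDL.i13 K H u := by
    intro u
    induction u using TensorProduct.induction_on with
    | zero => simp [mul_zero]
    | tmul x y =>
      rw [LinearMap.lTensor_tmul, claimA y]
      exact lemK0 W x y
    | add a b ha hb => simp [map_add, ha, hb, mul_add]
  have hDW : (YDL.cm K H).rTensor H W = YDL.i23 K H W * YDL.i13 K H W := by
    have := congrArg (TensorProduct.assoc K H H H).symm hco1'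
    rw [LinearEquiv.symm_apply_apply] at this
    rw [this, lemK W]
  -- algebra homomorphisms for qt1
  set D : H ⊗[K] H →ₐ[K] (H ⊗[K] H) ⊗[K] H :=
    Algebra.TensorProduct.map (Bialgebra.comulAlgHom K H) (AlgHom.id K H) with hDdef
  have hD : ∀ u : H ⊗[K] H, D u = (YDL.cm K H).rTensor H u := by
    intro u
    induction u using TensorProduct.induction_on with
    | zero => simp
    | tmul a b =>
      rw [hDdef]
      simp [Algebra.TensorProduct.map_tmul, Bialgebra.comulAlgHom_apply]
    | add a b ha hb => simp [map_add, ha, hb]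
  set i13A : H ⊗[K] H →ₐ[K] (H ⊗[K] H) ⊗[K] H :=
    Algebra.TensorProduct.map (Algebra.TensorProduct.includeLeft) (AlgHom.id K H)
    with hi13def
  set i23A : H ⊗[K] H →ₐ[K] (H ⊗[K] H) ⊗[K] H :=
    Algebra.TensorProduct.map (Algebra.TensorProduct.includeRight) (AlgHom.id K H)
    with hi23def
  have hi13 : ∀ u : H ⊗[K] H, i13A u = YDL.i13 K H u := by
    intro u
    induction u using TensorProduct.induction_on with
    | zero => simp
    | tmul a b =>
      rw [hi13def]
      simp [Algebra.TensorProduct.map_tmul, YDL.i13]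
    | add a b ha hb => simp [map_add, ha, hb]
  have hi23 : ∀ u : H ⊗[K] H, i23A u = YDL.i23 K H u := by
    intro u
    induction u using TensorProduct.induction_on with
    | zero => simp
    | tmul a b =>
      rw [hi23def]
      simp [Algebra.TensorProduct.map_tmul, YDL.i23]
    | add a b ha hb => simp [map_add, ha, hb]
  have qt1 : (YDL.cm K H).rTensor H R = YDL.i13 K H R * YDL.i23 K H R := by
    have hDW' : D W = i23A W * i13A W := by
      rw [hD, hDW, hi23, hi13]
    have hDRW : D R * D W = 1 := by rw [← map_mul, hRW, map_one]
    have hDWR : D W * D R = 1 := by rw [← map_mul, hWR, map_one]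
    have ht : (i13A R * i23A R) * D W = 1 := by
      rw [hDW', mul_assoc, ← mul_assoc (i23A R), ← map_mul, hRW, map_one, one_mul,
        ← map_mul, hRW, map_one]
    have : i13A R * i23A R = D R := by
      calc i13A R * i23A R = (i13A R * i23A R) * (D W * D R) := by rw [hDWR, mul_one]
        _ = ((i13A R * i23A R) * D W) * D R := (mul_assoc _ _ _).symm
        _ = D R := by rw [ht, one_mul]
    rw [← hD, ← this, hi13, hi23]
  -- qt2
  have lemJ0 : ∀ (v : H ⊗[K] H) (x y : H),
      (TensorProduct.comm K (H ⊗[K] H) H)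
          ((TensorProduct.assoc K H H H).symm (x ⊗ₜ[K] (v * ((1 : H) ⊗ₜ[K] y))))
        = YDL.j13 K H ((TensorProduct.comm K H H) v) * YDL.j12 K H (y ⊗ₜ[K] x) := by
    intro v x y
    induction v using TensorProduct.induction_on with
    | zero => simp [zero_mul, YDL.j13, YDL.j12]
    | tmul p q =>
      simp [YDL.j13, YDL.j12, Algebra.TensorProduct.tmul_mul_tmul]
    | add a b ha hb => simp [add_mul, tmul_add, map_add, ha, hb, YDL.j13, YDL.j12]
  have lemJ : ∀ u : H ⊗[K] H,
      (TensorProduct.comm K (H ⊗[K] H) H)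
          ((TensorProduct.assoc K H H H).symm (ρ.lTensor H u))
        = YDL.j13 K H R * YDL.j12 K H ((TensorProduct.comm K H H) u) := by
    intro u
    induction u using TensorProduct.induction_on with
    | zero => simp [mul_zero]
    | tmul x y =>
      rw [LinearMap.lTensor_tmul, claimA y, TensorProduct.comm_tmul, hRdef]
      exact lemJ0 W x y
    | add a b ha hb => simp [map_add, ha, hb, mul_add]
  have lemσ : ∀ u : H ⊗[K] H,
      (YDL.cm K H).lTensor H ((TensorProduct.comm K H H) u)
        = (TensorProduct.comm K (H ⊗[K] H) H) ((YDL.cm K H).rTensor H u) := by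
    intro u
    induction u using TensorProduct.induction_on with
    | zero => simp
    | tmul x y => simp
    | add a b ha hb => simp [map_add, ha, hb]
  have qt2 : (YDL.cm K H).lTensor H R = YDL.j13 K H R * YDL.j12 K H R := by
    have e1 : (YDL.cm K H).lTensor H R
        = (TensorProduct.comm K (H ⊗[K] H) H) ((YDL.cm K H).rTensor H W) := by
      rw [hRdef]; exact lemσ W
    have e2 : (YDL.cm K H).rTensor H W
        = (TensorProduct.assoc K H H H).symm (ρ.lTensor H W) := by
      have := congrArg (TensorProduct.assoc K H H H).symm hco1'
      rw [LinearEquiv.symm_apply_apply] at this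
      exact this
    rw [e1, e2, lemJ W, ← hRdef]
  refine ⟨R, ⟨⟨?_, qt1, qt2, qt3, qt4l, qt4r⟩, ?_, ?_⟩, ?_, ?_⟩
  · exact ⟨⟨R, W, hRW, hWR⟩, rfl⟩
  · rw [hRdef, commcomm, ← hRdef]; exact hRW
  · rw [hRdef, commcomm, ← hRdef]; exact hWR
  · intro a
    rw [hRdef, commcomm]
    exact claimA a
  · rw [hRdef, commcomm, hWdef]
end
end

section
/- Let (H,ζ) be a cotriangular Hopf algebra and M, N H-bicomodules viewed as Yetter-Drinfel'd-Long bimodules via h▷m=ζ(h,m₍₋₁₎)m₍₀₎, m◁h=m₍₀₎ζ(h,m₍₁₎). Then the braiding ψ_{M,N}(m⊗n)=m₍₋₁₎▷n₍₀₎⊗m₍₀₎◁n₍₁₎ is a symmetry: ψ_{N,M}∘ψ_{M,N}=id_{M⊗N}. -/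
noncomputable section
open TensorProduct

namespace S17
open YDL

variable {K : Type} [Field K] {H : Type} [Ring H] [HopfAlgebra K H]

variable (z : H ⊗[K] H →ₗ[K] K)

/-- `m ↦ m₍₋₁₎ ⊗ (m₍₀₎ ⊗ m₍₁₎)`. -/
def Tc {M : Type} [AddCommGroup M] [Module K M]
    (lco : M →ₗ[K] H ⊗[K] M) (rco : M →ₗ[K] M ⊗[K] H) :
    M →ₗ[K] H ⊗[K] (M ⊗[K] H) :=
  rco.lTensor H ∘ₗ lco

variable (M N : Type) [AddCommGroup M] [Module K M] [AddCommGroup N] [Module K N]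

/-- `(a⊗(x⊗b))⊗(p⊗(y⊗q)) ↦ z(a⊗p) z(q⊗b) • (y⊗x)`. -/
def Qm : (H ⊗[K] (M ⊗[K] H)) ⊗[K] (H ⊗[K] (N ⊗[K] H)) →ₗ[K] N ⊗[K] M :=
  (TensorProduct.lid K (N ⊗[K] M)).toLinearMap
  ∘ₗ z.rTensor (N ⊗[K] M)
  ∘ₗ (TensorProduct.lid K ((H ⊗[K] H) ⊗[K] (N ⊗[K] M))).toLinearMap
  ∘ₗ z.rTensor ((H ⊗[K] H) ⊗[K] (N ⊗[K] M))
  ∘ₗ (TensorProduct.map (TensorProduct.comm K H H).toLinearMap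
        (TensorProduct.comm K M N).toLinearMap
      ∘ₗ (tensorTensorTensorComm K H M H N).toLinearMap
      ∘ₗ TensorProduct.map (TensorProduct.comm K M H).toLinearMap
          (TensorProduct.comm K N H).toLinearMap).lTensor (H ⊗[K] H)
  ∘ₗ (tensorTensorTensorComm K H (M ⊗[K] H) H (N ⊗[K] H)).toLinearMap

@[simp] lemma Qm_tmul (a b p q : H) (x : M) (y : N) :
    Qm z M N ((a ⊗ₜ (x ⊗ₜ b)) ⊗ₜ (p ⊗ₜ (y ⊗ₜ q)))
      = z (a ⊗ₜ p) • z (q ⊗ₜ b) • (y ⊗ₜ x) := by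
  simp [Qm, ← smul_tmul', smul_smul]

/-- `a⊗(x⊗b) ↦ a₁⊗((a₂⊗(x⊗b₁))⊗b₂)`. -/
def Th : H ⊗[K] (M ⊗[K] H) →ₗ[K] H ⊗[K] ((H ⊗[K] (M ⊗[K] H)) ⊗[K] H) :=
  ((TensorProduct.assoc K H (M ⊗[K] H) H).symm.toLinearMap
    ∘ₗ (TensorProduct.assoc K M H H).symm.toLinearMap.lTensor H
    ∘ₗ ((cm K H).lTensor M).lTensor H).lTensor H
  ∘ₗ (TensorProduct.assoc K H H (M ⊗[K] H)).toLinearMap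
  ∘ₗ (cm K H).rTensor (M ⊗[K] H)

/-- `(a⊗(x⊗b))⊗(p⊗(y⊗q)) ↦ w₁(a⊗p) w₂(b⊗q) • (x⊗y)`. -/
def Gg (w₁ w₂ : H ⊗[K] H →ₗ[K] K) :
    (H ⊗[K] (M ⊗[K] H)) ⊗[K] (H ⊗[K] (N ⊗[K] H)) →ₗ[K] M ⊗[K] N :=
  (TensorProduct.lid K (M ⊗[K] N)).toLinearMap
  ∘ₗ w₁.rTensor (M ⊗[K] N)
  ∘ₗ ((TensorProduct.rid K (M ⊗[K] N)).toLinearMap ∘ₗ w₂.lTensor (M ⊗[K] N)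
       ∘ₗ (tensorTensorTensorComm K M H N H).toLinearMap).lTensor (H ⊗[K] H)
  ∘ₗ (tensorTensorTensorComm K H (M ⊗[K] H) H (N ⊗[K] H)).toLinearMap

@[simp] lemma Gg_tmul (w₁ w₂ : H ⊗[K] H →ₗ[K] K) (a b p q : H) (x : M) (y : N) :
    Gg (K := K) (H := H) M N w₁ w₂ ((a ⊗ₜ (x ⊗ₜ b)) ⊗ₜ (p ⊗ₜ (y ⊗ₜ q)))
      = w₁ (a ⊗ₜ p) • w₂ (b ⊗ₜ q) • (x ⊗ₜ y) := by
  simp [Gg, ← smul_tmul', smul_smul, mul_comm]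

/-- `a⊗(x⊗b) ↦ ε(a) ε(b) • x`. -/
def sM : H ⊗[K] (M ⊗[K] H) →ₗ[K] M :=
  (TensorProduct.lid K M).toLinearMap ∘ₗ (cu K H).rTensor M
  ∘ₗ ((TensorProduct.rid K M).toLinearMap ∘ₗ (cu K H).lTensor M).lTensor H

@[simp] lemma sM_tmul (a b : H) (x : M) :
    sM (K := K) (H := H) M (a ⊗ₜ (x ⊗ₜ b)) = cu K H a • cu K H b • x := by
  simp [sM, smul_smul, mul_comm]

lemma Qm_natural {M' N' : Type} [AddCommGroup M'] [Module K M'] [AddCommGroup N'] [Module K N']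
    (f : M →ₗ[K] M') (g : N →ₗ[K] N') :
    TensorProduct.map g f ∘ₗ Qm z M N
      = Qm z M' N' ∘ₗ TensorProduct.map ((f.rTensor H).lTensor H) ((g.rTensor H).lTensor H) := by
  ext a x b p y q
  simp

lemma Gg_eps : Gg (K := K) (H := H) M N (epsBoth K H) (epsBoth K H)
    = TensorProduct.map (sM (K := K) (H := H) M) (sM (K := K) (H := H) N) := by
  ext a x b p y q
  simp [epsBoth, smul_smul, mul_comm, mul_left_comm, ← smul_tmul', smul_tmul]

lemma sM_Tc (lco : M →ₗ[K] H ⊗[K] M) (rco : M →ₗ[K] M ⊗[K] H)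
    (lcounit : (TensorProduct.lid K M).toLinearMap ∘ₗ (cu K H).rTensor M ∘ₗ lco
      = LinearMap.id)
    (rcounit : (TensorProduct.rid K M).toLinearMap ∘ₗ (cu K H).lTensor M ∘ₗ rco
      = LinearMap.id) :
    sM (K := K) (H := H) M ∘ₗ Tc lco rco = LinearMap.id := by
  apply LinearMap.ext
  intro m
  have hu : ∀ u : H ⊗[K] M,
      (((TensorProduct.rid K M).toLinearMap ∘ₗ (cu K H).lTensor M).lTensor H)
        (rco.lTensor H u) = u := by
    intro u
    induction u using TensorProduct.induction_on with
    | zero => simp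
    | tmul a x =>
        have := LinearMap.congr_fun rcounit x
        simp only [LinearMap.comp_apply, LinearMap.id_apply, LinearEquiv.coe_coe] at this
        simp [this]
    | add u v hu hv => simp [hu, hv]
  simp only [Tc, sM, LinearMap.comp_apply, LinearMap.id_apply]
  rw [hu (lco m)]
  have := LinearMap.congr_fun lcounit m
  simpa using this

lemma braid_eq (lcoM : M →ₗ[K] H ⊗[K] M) (rcoM : M →ₗ[K] M ⊗[K] H)
    (lcoN : N →ₗ[K] H ⊗[K] N) (rcoN : N →ₗ[K] N ⊗[K] H)
    (bicomodN : rcoN.lTensor H ∘ₗ lcoN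
      = (TensorProduct.assoc K H N H).toLinearMap ∘ₗ lcoN.rTensor H ∘ₗ rcoN) :
    braid K H lcoM (ractZ K H rcoM z) (lactZ K H lcoN z) rcoN
      = Qm z M N ∘ₗ TensorProduct.map (Tc lcoM rcoM) (Tc lcoN rcoN) := by
  apply TensorProduct.ext'
  intro m n
  have hb := LinearMap.congr_fun bicomodN n
  simp only [LinearMap.comp_apply, LinearEquiv.coe_coe] at hb
  simp only [braid, Tc, LinearMap.comp_apply, TensorProduct.map_tmul, LinearEquiv.coe_coe]
  rw [hb]
  generalize lcoM m = u
  generalize rcoN n = v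
  induction u using TensorProduct.induction_on with
  | zero => simp
  | add u₁ u₂ h₁ h₂ => simp only [add_tmul, tmul_add, map_add, h₁, h₂]
  | tmul a x =>
    induction v using TensorProduct.induction_on with
    | zero => simp
    | add v₁ v₂ h₁ h₂ => simp only [add_tmul, tmul_add, map_add, h₁, h₂]
    | tmul y c =>
      simp only [tensorTensorTensorComm_tmul, TensorProduct.map_tmul, lactZ, ractZ,
        LinearMap.comp_apply, LinearEquiv.coe_coe, LinearMap.lTensor_tmul,
        LinearMap.rTensor_tmul, assoc_tmul]
      generalize lcoN y = w
      generalize rcoM x = s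
      induction w using TensorProduct.induction_on with
      | zero => simp
      | add w₁ w₂ h₁ h₂ => simp only [add_tmul, tmul_add, map_add, h₁, h₂]
      | tmul p y₀ =>
        induction s using TensorProduct.induction_on with
        | zero => simp
        | add s₁ s₂ h₁ h₂ => simp only [add_tmul, tmul_add, map_add, h₁, h₂]
        | tmul x₀ b =>
          simp [← smul_tmul', smul_tmul, smul_smul, mul_comm]

set_option maxHeartbeats 1000000 in
lemma QQTh :
    Qm z N M ∘ₗ Qm z (H ⊗[K] (M ⊗[K] H)) (H ⊗[K] (N ⊗[K] H))
        ∘ₗ TensorProduct.map (Th (K := K) (H := H) M) (Th (K := K) (H := H) N)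
      = Gg (K := K) (H := H) M N (conv K H z (z ∘ₗ (TensorProduct.comm K H H).toLinearMap))
          (conv K H z (z ∘ₗ (TensorProduct.comm K H H).toLinearMap)) := by
  ext a x b p y q
  simp only [LinearMap.comp_apply, TensorProduct.map_tmul, Gg_tmul, conv, cm2,
    LinearEquiv.coe_coe, tensorTensorTensorComm_tmul, Th, LinearMap.rTensor_tmul,
    LinearMap.lTensor_tmul, TensorProduct.AlgebraTensorModule.curry_apply,
    TensorProduct.curry_apply, LinearMap.coe_restrictScalars]
  generalize cm K H a = ca
  generalize cm K H p = cp
  induction ca using TensorProduct.induction_on with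
  | zero => simp
  | add u₁ u₂ h₁ h₂ => simp only [add_tmul, tmul_add, map_add, h₁, h₂, smul_add, add_smul]
  | tmul a₁ a₂ =>
  induction cp using TensorProduct.induction_on with
  | zero => simp
  | add u₁ u₂ h₁ h₂ => simp only [add_tmul, tmul_add, map_add, h₁, h₂, smul_add, add_smul]
  | tmul p₁ p₂ =>
  simp only [assoc_tmul, LinearMap.lTensor_tmul, LinearMap.comp_apply, LinearEquiv.coe_coe,
    TensorProduct.map_tmul, tensorTensorTensorComm_tmul, LinearMap.mul'_apply]
  generalize cm K H b = cb
  generalize cm K H q = cq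
  induction cb using TensorProduct.induction_on with
  | zero => simp
  | add u₁ u₂ h₁ h₂ => simp only [add_tmul, tmul_add, map_add, h₁, h₂, smul_add, add_smul,
      mul_add, add_mul]
  | tmul b₁ b₂ =>
  induction cq using TensorProduct.induction_on with
  | zero => simp
  | add u₁ u₂ h₁ h₂ => simp only [add_tmul, tmul_add, map_add, h₁, h₂, smul_add, add_smul,
      mul_add, add_mul]
  | tmul q₁ q₂ =>
  simp [← smul_tmul', smul_tmul, smul_smul, mul_comm, mul_left_comm, mul_assoc]

set_option maxHeartbeats 1000000 in
lemma Tc_Tc (lco : M →ₗ[K] H ⊗[K] M) (rco : M →ₗ[K] M ⊗[K] H)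
    (lcoassoc : (TensorProduct.assoc K H H M).toLinearMap ∘ₗ (cm K H).rTensor M ∘ₗ lco
      = lco.lTensor H ∘ₗ lco)
    (rcoassoc : (TensorProduct.assoc K M H H).toLinearMap ∘ₗ rco.rTensor H ∘ₗ rco
      = (cm K H).lTensor M ∘ₗ rco)
    (bicomod : rco.lTensor H ∘ₗ lco
      = (TensorProduct.assoc K H M H).toLinearMap ∘ₗ lco.rTensor H ∘ₗ rco) :
    ((Tc lco rco).rTensor H).lTensor H ∘ₗ Tc lco rco
      = Th (K := K) (H := H) M ∘ₗ Tc lco rco := by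
  set D : H ⊗[K] (M ⊗[K] H) →ₗ[K] (H ⊗[K] (M ⊗[K] H)) ⊗[K] H :=
    (rco.lTensor H).rTensor H ∘ₗ (TensorProduct.assoc K H M H).symm.toLinearMap with hDdef
  -- pointwise description of D
  have hD : ∀ (c : H) (w : M ⊗[K] H),
      D (c ⊗ₜ w) = (((TensorProduct.mk K H (M ⊗[K] H)) c ∘ₗ rco).rTensor H) w := by
    intro c w
    induction w using TensorProduct.induction_on with
    | zero => simp
    | add w₁ w₂ h₁ h₂ => simp only [tmul_add, map_add, h₁, h₂]
    | tmul x₀ h => simp [hDdef]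
  -- claim 1
  have claim1 : ∀ u : H ⊗[K] M,
      (((Tc lco rco).rTensor H).lTensor H) (rco.lTensor H u)
        = ((D ∘ₗ Tc lco rco).lTensor H) u := by
    intro u
    induction u using TensorProduct.induction_on with
    | zero => simp
    | add u₁ u₂ h₁ h₂ => simp only [map_add, h₁, h₂]
    | tmul c x =>
      have hb := LinearMap.congr_fun bicomod x
      simp only [LinearMap.comp_apply, LinearEquiv.coe_coe] at hb
      have hb' : (lco.rTensor H) (rco x)
          = (TensorProduct.assoc K H M H).symm ((rco.lTensor H) (lco x)) := by
        rw [hb]; simp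
      simp only [LinearMap.lTensor_tmul, LinearMap.comp_apply, Tc]
      rw [show ((rco.lTensor H ∘ₗ lco).rTensor H) (rco x)
            = ((rco.lTensor H).rTensor H) ((lco.rTensor H) (rco x)) by
          simp [LinearMap.rTensor_comp]]
      rw [hb', hDdef]
      simp
  -- final bookkeeping: the fully structural comparison
  have claim2 : ∀ (c : H) (w : M ⊗[K] H),
      (((TensorProduct.mk K H (M ⊗[K] H)) c).rTensor H)
          ((TensorProduct.assoc K M H H).symm ((cm K H).lTensor M w))
        = ((TensorProduct.assoc K H (M ⊗[K] H) H).symm.toLinearMap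
            ∘ₗ (TensorProduct.assoc K M H H).symm.toLinearMap.lTensor H
            ∘ₗ ((cm K H).lTensor M).lTensor H) (c ⊗ₜ w) := by
    intro c w
    induction w using TensorProduct.induction_on with
    | zero => simp
    | add w₁ w₂ h₁ h₂ => simp only [tmul_add, map_add, h₁, h₂]
    | tmul x₀ b =>
      simp only [LinearMap.lTensor_tmul, LinearMap.comp_apply, LinearEquiv.coe_coe]
      generalize cm K H b = cb
      induction cb using TensorProduct.induction_on with
      | zero => simp
      | add v₁ v₂ h₁ h₂ => simp only [tmul_add, map_add, h₁, h₂]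
      | tmul b₁ b₂ => simp
  -- assemble
  apply LinearMap.ext
  intro m
  have e0 : Tc lco rco m = (rco.lTensor H) (lco m) := rfl
  rw [LinearMap.comp_apply, LinearMap.comp_apply, e0, claim1 (lco m)]
  rw [show ((D ∘ₗ Tc lco rco).lTensor H) (lco m)
        = (D.lTensor H) (((rco.lTensor H).lTensor H) ((lco.lTensor H) (lco m))) by
      simp [Tc, LinearMap.lTensor_comp]]
  have hl := LinearMap.congr_fun lcoassoc m
  simp only [LinearMap.comp_apply, LinearEquiv.coe_coe] at hl
  rw [← hl]
  generalize lco m = u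
  induction u using TensorProduct.induction_on with
  | zero => simp
  | add u₁ u₂ h₁ h₂ => simp only [map_add, h₁, h₂]
  | tmul a x =>
    have hr := LinearMap.congr_fun rcoassoc x
    simp only [LinearMap.comp_apply, LinearEquiv.coe_coe] at hr
    have hr' : (rco.rTensor H) (rco x)
        = (TensorProduct.assoc K M H H).symm (((cm K H).lTensor M) (rco x)) := by
      rw [← hr]; simp
    simp only [LinearMap.rTensor_tmul, Th, LinearMap.comp_apply, LinearEquiv.coe_coe,
      LinearMap.lTensor_tmul]
    generalize cm K H a = ca
    induction ca using TensorProduct.induction_on with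
    | zero => simp
    | add v₁ v₂ h₁ h₂ => simp only [add_tmul, map_add, h₁, h₂]
    | tmul a₁ a₂ =>
      simp only [assoc_tmul, LinearMap.lTensor_tmul]
      congr 1
      rw [hD a₂ (rco x)]
      rw [show (((TensorProduct.mk K H (M ⊗[K] H)) a₂ ∘ₗ rco).rTensor H) (rco x)
            = ((((TensorProduct.mk K H (M ⊗[K] H)) a₂)).rTensor H) ((rco.rTensor H) (rco x)) by
          simp [LinearMap.rTensor_comp]]
      rw [hr']
      rw [claim2 a₂ (rco x)]

end S17
/-- over a cotriangular Hopf algebra `(H, ζ)` the induced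
braiding on `H`-bicomodules is a symmetry: `ψ_{N,M} ∘ ψ_{M,N} = id`. -/
theorem statement17 (K : Type) [Field K] (H : Type) [Ring H] [HopfAlgebra K H]
    (z : H ⊗[K] H →ₗ[K] K) (hz : YDL.IsCotriangular K H z)
    (M N : Type) [AddCommGroup M] [Module K M] [AddCommGroup N] [Module K N]
    (lcoactM : M →ₗ[K] H ⊗[K] M) (rcoactM : M →ₗ[K] M ⊗[K] H)
    (lcoactN : N →ₗ[K] H ⊗[K] N) (rcoactN : N →ₗ[K] N ⊗[K] H)
    (lcoassocM : (TensorProduct.assoc K H H M).toLinearMap ∘ₗ (YDL.cm K H).rTensor M ∘ₗ lcoactM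
      = lcoactM.lTensor H ∘ₗ lcoactM)
    (lcounitM : (TensorProduct.lid K M).toLinearMap ∘ₗ (YDL.cu K H).rTensor M ∘ₗ lcoactM
      = LinearMap.id)
    (rcoassocM : (TensorProduct.assoc K M H H).toLinearMap ∘ₗ rcoactM.rTensor H ∘ₗ rcoactM
      = (YDL.cm K H).lTensor M ∘ₗ rcoactM)
    (rcounitM : (TensorProduct.rid K M).toLinearMap ∘ₗ (YDL.cu K H).lTensor M ∘ₗ rcoactM
      = LinearMap.id)
    (bicomodM : rcoactM.lTensor H ∘ₗ lcoactM
      = (TensorProduct.assoc K H M H).toLinearMap ∘ₗ lcoactM.rTensor H ∘ₗ rcoactM)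
    (lcoassocN : (TensorProduct.assoc K H H N).toLinearMap ∘ₗ (YDL.cm K H).rTensor N ∘ₗ lcoactN
      = lcoactN.lTensor H ∘ₗ lcoactN)
    (lcounitN : (TensorProduct.lid K N).toLinearMap ∘ₗ (YDL.cu K H).rTensor N ∘ₗ lcoactN
      = LinearMap.id)
    (rcoassocN : (TensorProduct.assoc K N H H).toLinearMap ∘ₗ rcoactN.rTensor H ∘ₗ rcoactN
      = (YDL.cm K H).lTensor N ∘ₗ rcoactN)
    (rcounitN : (TensorProduct.rid K N).toLinearMap ∘ₗ (YDL.cu K H).lTensor N ∘ₗ rcoactN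
      = LinearMap.id)
    (bicomodN : rcoactN.lTensor H ∘ₗ lcoactN
      = (TensorProduct.assoc K H N H).toLinearMap ∘ₗ lcoactN.rTensor H ∘ₗ rcoactN) :
    YDL.braid K H lcoactN (YDL.ractZ K H rcoactN z) (YDL.lactZ K H lcoactM z) rcoactM
      ∘ₗ YDL.braid K H lcoactM (YDL.ractZ K H rcoactM z) (YDL.lactZ K H lcoactN z) rcoactN
    = LinearMap.id := by
  rw [S17.braid_eq z N M lcoactN rcoactN lcoactM rcoactM bicomodM,
      S17.braid_eq z M N lcoactM rcoactM lcoactN rcoactN bicomodN]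
  set TM := S17.Tc lcoactM rcoactM with hTM
  set TN := S17.Tc lcoactN rcoactN with hTN
  have h1 := S17.Qm_natural z M N TM TN
  have h2 := S17.Tc_Tc (K := K) (H := H) M lcoactM rcoactM lcoassocM rcoassocM bicomodM
  have h3 := S17.Tc_Tc (K := K) (H := H) N lcoactN rcoactN lcoassocN rcoassocN bicomodN
  have h4 := S17.QQTh z M N
  have h5 := S17.Gg_eps (K := K) (H := H) M N
  have h6 := S17.sM_Tc (K := K) (H := H) M lcoactM rcoactM lcounitM rcounitM
  have h7 := S17.sM_Tc (K := K) (H := H) N lcoactN rcoactN lcounitN rcounitN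
  apply LinearMap.ext
  intro t
  simp only [LinearMap.comp_apply, LinearMap.id_apply]
  have c1 := LinearMap.congr_fun h1 (TensorProduct.map TM TN t)
  simp only [LinearMap.comp_apply] at c1
  rw [c1]
  have c2 : (TensorProduct.map ((TM.rTensor H).lTensor H) ((TN.rTensor H).lTensor H))
        (TensorProduct.map TM TN t)
      = TensorProduct.map (S17.Th (K := K) (H := H) M) (S17.Th (K := K) (H := H) N)
          (TensorProduct.map TM TN t) := by
    rw [← LinearMap.comp_apply, ← TensorProduct.map_comp, hTM, hTN, h2, h3,
        TensorProduct.map_comp, LinearMap.comp_apply]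
  rw [c2]
  have c3 := LinearMap.congr_fun h4 (TensorProduct.map TM TN t)
  simp only [LinearMap.comp_apply] at c3
  rw [c3, hz.cot, h5]
  rw [← LinearMap.comp_apply, ← TensorProduct.map_comp, h6, h7]
  simp
end
end
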